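/- arXiv:1111.2812 — 16 statements merged into one kernel-verified Lean document; each statement's English description precedes it below -/
import Mathlib

section
/- Let (X,d) be a compact metric space, let f : X → X be continuous, and let Λ ⊆ X be closed. If f is open on a neighbourhood of Λ and expanding on a neighbourhood of Λ, then f is ball expanding on a neighbourhood of Λ and locally one-to-one on Λ. -/
open Metric Filter Topology Set

section Defs

variable {X : Type*} [MetricSpace X]

/-- `f` is open at every point of `S`. -/
def OpenOnSet (f : X → X) (S : Set X) : Prop :=
  ∀ x ∈ S, ∀ U ∈ nhds x, f x ∈ interior (f '' U)

/-- `f` is locally one-to-one at every point of `S`. -/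
def LocOneToOneOn (f : X → X) (S : Set X) : Prop :=
  ∀ x ∈ S, ∃ V : Set X, IsOpen V ∧ x ∈ V ∧ Set.InjOn f V

/-- `f` is expanding on `S`. -/
def ExpandingOn (f : X → X) (S : Set X) : Prop :=
  ∃ δ > 0, ∃ μ > 1, ∀ x ∈ S, ∀ y ∈ S, dist x y < δ → μ * dist x y ≤ dist (f x) (f y)

/-- `f` is ball expanding on `S`. -/
def BallExpandingOn (f : X → X) (S : Set X) : Prop :=
  ∃ μ > 1, ∃ ν > 0, ∀ x ∈ S, ∀ ε : ℝ, 0 < ε → ε < ν →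
    Metric.ball (f x) (μ * ε) ⊆ f '' Metric.ball x ε

end Defs

/-- Uniform openness on a compact set: if `f` is open on `U₁ ⊇ K` with `K` compact, then for
every `η > 0` there is a uniform `ρ > 0` such that `B(f x, ρ) ⊆ f(B(x, η))` for all `x ∈ K`. -/
private lemma unif_open {X : Type*} [MetricSpace X] [CompactSpace X] {f : X → X}
    (hf : Continuous f) {U₁ K : Set X} (hK : IsCompact K) (hKU : K ⊆ U₁)
    (hopen1 : OpenOnSet f U₁) {η : ℝ} (hη : 0 < η) :
    ∃ ρ > 0, ∀ x ∈ K, Metric.ball (f x) ρ ⊆ f '' Metric.ball x η := by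
  by_contra hcon
  push_neg at hcon
  have H : ∀ n : ℕ, ∃ x, x ∈ K ∧ ∃ y, dist y (f x) < 1/(n+1) ∧ y ∉ f '' Metric.ball x η := by
    intro n
    obtain ⟨x, hxK, hns⟩ := hcon (1/(n+1)) (by positivity)
    obtain ⟨y, hy, hyn⟩ := Set.not_subset.mp hns
    exact ⟨x, hxK, y, by simpa [Metric.mem_ball] using hy, hyn⟩
  choose x hxK y hy1 hy2 using H
  obtain ⟨a, haK, φ, hφ, hlim⟩ := hK.tendsto_subseq hxK
  have hInt := hopen1 a (hKU haK) (Metric.ball a (η/2)) (Metric.ball_mem_nhds a (by positivity))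
  obtain ⟨ε, hε, hball⟩ := Metric.mem_nhds_iff.mp (mem_interior_iff_mem_nhds.mp hInt)
  have hfc : Tendsto (fun n => f (x (φ n))) atTop (𝓝 (f a)) := (hf.tendsto a).comp hlim
  obtain ⟨N₁, hN₁⟩ := Metric.tendsto_atTop.mp hlim (min (η/2) (ε/4)) (by positivity)
  obtain ⟨N₂, hN₂⟩ := Metric.tendsto_atTop.mp hfc (ε/4) (by positivity)
  obtain ⟨N₃, hN₃⟩ := exists_nat_gt (4/ε)
  set n := max N₁ (max N₂ N₃) with hn
  have h1 : dist (x (φ n)) a < min (η/2) (ε/4) := hN₁ n (le_max_left _ _)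
  have h2 : dist (f (x (φ n))) (f a) < ε/4 := hN₂ n (le_max_of_le_right (le_max_left _ _))
  have hφn : (N₃ : ℝ) ≤ (φ n : ℝ) := by
    exact_mod_cast le_trans (le_max_of_le_right (le_max_right _ _)) (hφ.le_apply)
  have h3 : 1/((φ n : ℝ)+1) < ε/4 := by
    rw [div_lt_iff₀ (by positivity)]
    have h4 : 4/ε < (φ n : ℝ) + 1 := by linarith
    rw [div_lt_iff₀ hε] at h4
    nlinarith
  have hyball : y (φ n) ∈ Metric.ball (f a) ε := by
    rw [Metric.mem_ball]
    have := hy1 (φ n)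
    calc dist (y (φ n)) (f a) ≤ dist (y (φ n)) (f (x (φ n))) + dist (f (x (φ n))) (f a) :=
          dist_triangle _ _ _
      _ < 1/((φ n : ℝ)+1) + ε/4 := by linarith [hy1 (φ n)]
      _ < ε := by linarith
  have hsub : Metric.ball a (η/2) ⊆ Metric.ball (x (φ n)) η := by
    intro w hw
    rw [Metric.mem_ball] at hw ⊢
    have := lt_of_lt_of_le h1 (min_le_left _ _)
    calc dist w (x (φ n)) ≤ dist w a + dist a (x (φ n)) := dist_triangle _ _ _
      _ < η/2 + η/2 := by rw [dist_comm a]; linarith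
      _ = η := by ring
  exact hy2 (φ n) (Set.image_mono (f := f) hsub (hball hyball))

theorem stmt0 {X : Type*} [MetricSpace X] [CompactSpace X] (f : X → X)
    (hf : Continuous f) (Λ : Set X) (hΛ : IsClosed Λ)
    (hopen : ∃ U : Set X, IsOpen U ∧ Λ ⊆ U ∧ OpenOnSet f U)
    (hexp : ∃ U : Set X, IsOpen U ∧ Λ ⊆ U ∧ ExpandingOn f U) :
    (∃ U : Set X, IsOpen U ∧ Λ ⊆ U ∧ BallExpandingOn f U) ∧ LocOneToOneOn f Λ := by
  obtain ⟨U₁, hU₁o, hΛU₁, hopen1⟩ := hopen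
  obtain ⟨U₂, hU₂o, hΛU₂, δ, hδ, μ, hμ, hexp2⟩ := hexp
  have hμ0 : (0:ℝ) < μ := lt_trans one_pos hμ
  constructor
  · obtain ⟨W, hWo, hΛW, hWcl⟩ := normal_exists_closure_subset hΛ (hU₁o.inter hU₂o)
      (Set.subset_inter hΛU₁ hΛU₂)
    have hKc : IsCompact (closure W) := isClosed_closure.isCompact
    obtain ⟨t, ht, hthick⟩ := hKc.exists_thickening_subset_open (hU₁o.inter hU₂o) hWcl
    set η := min t δ with hηdef
    have hηpos : 0 < η := lt_min ht hδ
    have hballU : ∀ x ∈ closure W, Metric.ball x η ⊆ U₁ ∩ U₂ := by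
      intro x hx z hz
      apply hthick
      rw [Metric.mem_thickening_iff]
      exact ⟨x, hx, lt_of_lt_of_le (Metric.mem_ball.mp hz) (min_le_left _ _)⟩
    have hKU₁ : closure W ⊆ U₁ := fun x hx => (hballU x hx (Metric.mem_ball_self hηpos)).1
    obtain ⟨ρ, hρ, hunif⟩ := unif_open hf hKc hKU₁ hopen1 hηpos
    refine ⟨W, hWo, hΛW, μ, hμ, ρ/μ, by positivity, ?_⟩
    intro x hxW ε hε hεν z hz
    have hxcl : x ∈ closure W := subset_closure hxW
    rw [Metric.mem_ball] at hz
    have hzρ : z ∈ Metric.ball (f x) ρ := by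
      rw [Metric.mem_ball]
      calc dist z (f x) < μ * ε := hz
        _ < μ * (ρ/μ) := by exact mul_lt_mul_of_pos_left hεν hμ0
        _ = ρ := by field_simp
    obtain ⟨w, hwball, hwz⟩ := hunif x hxcl hzρ
    have hwb := Metric.mem_ball.mp hwball
    have hwU₂ : w ∈ U₂ := (hballU x hxcl hwball).2
    have hxU₂ : x ∈ U₂ := (hballU x hxcl (Metric.mem_ball_self hηpos)).2
    have hd : dist w x < δ := lt_of_lt_of_le hwb (min_le_right _ _)
    have hkey := hexp2 w hwU₂ x hxU₂ hd
    rw [hwz] at hkey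
    have hwε : dist w x < ε := by nlinarith [dist_nonneg (x := w) (y := x)]
    exact ⟨w, Metric.mem_ball.mpr hwε, hwz⟩
  · intro x hxΛ
    refine ⟨U₂ ∩ Metric.ball x (δ/2), hU₂o.inter Metric.isOpen_ball,
      ⟨hΛU₂ hxΛ, Metric.mem_ball_self (by positivity)⟩, ?_⟩
    intro a ha b hb hab
    have h1 := Metric.mem_ball.mp ha.2
    have h2 := Metric.mem_ball.mp hb.2
    have hd : dist a b < δ := by
      calc dist a b ≤ dist a x + dist x b := dist_triangle a x b
        _ < δ := by rw [dist_comm x b]; linarith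
    have hkey := hexp2 a ha.1 b hb.1 hd
    rw [hab, dist_self] at hkey
    have : dist a b = 0 :=
      le_antisymm (by nlinarith [dist_nonneg (x := a) (y := b)]) dist_nonneg
    exact dist_eq_zero.mp this
end

section
/- Let (X,d) be a compact metric space, let f : X → X be continuous, and let Λ ⊆ X be closed. If f is ball expanding on a neighbourhood of Λ and locally one-to-one on Λ, then f is open on a neighbourhood of Λ and expanding on a neighbourhood of Λ. -/
open Metric Filter Topology Set

theorem stmt1 {X : Type*} [MetricSpace X] [CompactSpace X] (f : X → X)
    (hf : Continuous f) (Λ : Set X) (hΛ : IsClosed Λ)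
    (hball : ∃ U : Set X, IsOpen U ∧ Λ ⊆ U ∧ BallExpandingOn f U)
    (h121 : LocOneToOneOn f Λ) :
    (∃ U : Set X, IsOpen U ∧ Λ ⊆ U ∧ OpenOnSet f U) ∧
    (∃ U : Set X, IsOpen U ∧ Λ ⊆ U ∧ ExpandingOn f U) := by
  obtain ⟨U, hUopen, hΛU, μ, hμ, ν, hν, hbe⟩ := hball
  have hμ0 : (0:ℝ) < μ := by linarith
  constructor
  · refine ⟨U, hUopen, hΛU, fun x hx W hW => ?_⟩
    obtain ⟨ε, hε, hb⟩ := Metric.mem_nhds_iff.1 hW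
    set ε' := min (ε/2) (ν/2) with hε'def
    have hε' : 0 < ε' := lt_min (by linarith) (by linarith)
    have h1 : ε' < ν := lt_of_le_of_lt (min_le_right _ _) (by linarith)
    have hsub : Metric.ball (f x) (μ * ε') ⊆ f '' W := by
      refine (hbe x hx ε' hε' h1).trans (Set.image_mono ?_)
      exact (Metric.ball_subset_ball
        (le_trans (min_le_left _ _) (by linarith))).trans hb
    rw [mem_interior_iff_mem_nhds]
    exact Filter.mem_of_superset
      (Metric.ball_mem_nhds _ (by positivity)) hsub
  · have hΛc : IsCompact Λ := hΛ.isCompact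
    choose V hVopen hmem hinj using h121
    obtain ⟨ρ, hρ, hleb⟩ := lebesgue_number_lemma_of_metric hΛc
      (c := fun i : Λ => V i i.2) (fun i => hVopen i i.2)
      (fun x hx => Set.mem_iUnion.2 ⟨⟨x, hx⟩, hmem x hx⟩)
    refine ⟨U ∩ ⋃ z ∈ Λ, Metric.ball z (ρ/2),
      hUopen.inter (isOpen_biUnion fun _ _ => Metric.isOpen_ball),
      fun x hx => ⟨hΛU hx, Set.mem_biUnion hx (Metric.mem_ball_self (by linarith))⟩,
      min (ρ/2) ν, lt_min (by linarith) hν, μ, hμ, ?_⟩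
    rintro x ⟨hxU, hx1⟩ y ⟨hyU, hy1⟩ hxy
    rcases eq_or_lt_of_le (dist_nonneg : 0 ≤ dist x y) with h0 | h0
    · rw [← h0, mul_zero]; exact dist_nonneg
    by_contra hcon
    push_neg at hcon
    obtain ⟨z, hzΛ, hxz⟩ := Set.mem_iUnion₂.1 hx1
    obtain ⟨i, hi⟩ := hleb z hzΛ
    have hdν : dist x y < ν := lt_of_lt_of_le hxy (min_le_right _ _)
    have hdρ : dist x y < ρ/2 := lt_of_lt_of_le hxy (min_le_left _ _)
    have hdivlt : dist (f x) (f y) / μ < dist x y := (div_lt_iff₀ hμ0).2 (by linarith)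
    set ε := (dist (f x) (f y) / μ + dist x y) / 2 with hεdef
    have hεpos : 0 < ε := by
      have : 0 ≤ dist (f x) (f y) / μ := by positivity
      rw [hεdef]; linarith
    have hεlt : ε < dist x y := by rw [hεdef]; linarith
    have hμε : dist (f x) (f y) < μ * ε := by
      have : dist (f x) (f y) / μ < ε := by rw [hεdef]; linarith
      calc dist (f x) (f y) = μ * (dist (f x) (f y) / μ) := by
            field_simp
        _ < μ * ε := by exact (mul_lt_mul_iff_right₀ hμ0).2 this
    have hεν : ε < ν := lt_trans hεlt hdν
    obtain ⟨y', hy', hfy'⟩ := hbe x hxU ε hεpos hεν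
      (Metric.mem_ball.2 (by rw [dist_comm]; exact hμε))
    have hxz' : dist x z < ρ/2 := Metric.mem_ball.1 hxz
    have hyV : y ∈ V i i.2 := hi (Metric.mem_ball.2 (by
      calc dist y z ≤ dist y x + dist x z := dist_triangle _ _ _
        _ < ρ/2 + ρ/2 := by rw [dist_comm y x]; exact add_lt_add hdρ hxz'
        _ = ρ := by ring))
    have hy'd : dist y' x < ε := Metric.mem_ball.1 hy'
    have hy'V : y' ∈ V i i.2 := hi (Metric.mem_ball.2 (by
      calc dist y' z ≤ dist y' x + dist x z := dist_triangle _ _ _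
        _ < ρ/2 + ρ/2 := add_lt_add (lt_trans hy'd (lt_trans hεlt hdρ)) hxz'
        _ = ρ := by ring))
    have : y' = y := hinj i i.2 hy'V hyV hfy'
    rw [this] at hy'd
    rw [dist_comm y x] at hy'd
    linarith
end

section
/- Let (X,d) be a compact metric space, let f : X → X be continuous, and let Λ ⊆ X be closed. If f is open on Λ and satisfies property (⋆), then f is ball expanding on Λ. -/
open Metric Filter Topology Set

section Defs

variable {X : Type*} [MetricSpace X]

/-- property `(⋆)` of `f` with respect to `Λ`. -/
def StarProp (f : X → X) (Λ : Set X) : Prop :=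
  ∃ δ > 0, ∃ μ > 1, ∀ x ∈ Λ, ∀ y : X, dist x y < δ → μ * dist x y ≤ dist (f x) (f y)

end Defs

theorem stmt2 {X : Type*} [MetricSpace X] [CompactSpace X] (f : X → X)
    (hf : Continuous f) (Λ : Set X) (hΛ : IsClosed Λ)
    (hopen : OpenOnSet f Λ) (hstar : StarProp f Λ) :
    BallExpandingOn f Λ := by
  obtain ⟨δ, hδ, μ, hμ, hst⟩ := hstar
  rcases Set.eq_empty_or_nonempty Λ with hΛe | hΛne
  · exact ⟨2, by norm_num, 1, by norm_num, fun x hx => by simp [hΛe] at hx⟩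
  have hμ0 : (0:ℝ) < μ := lt_trans one_pos hμ
  -- per-point data
  have key : ∀ p : X, ∃ r ρ : ℝ, 0 < r ∧ 0 < ρ ∧
      (p ∈ Λ → r ≤ δ / 2 ∧ (∀ x, dist x p < r → dist (f x) (f p) < ρ / 2) ∧
        Metric.ball (f p) ρ ⊆ f '' Metric.ball p (δ / 2)) := by
    intro p
    by_cases hp : p ∈ Λ
    · have h1 := hopen p hp (Metric.ball p (δ / 2))
        (Metric.ball_mem_nhds p (by positivity))
      have h2 : f '' Metric.ball p (δ / 2) ∈ nhds (f p) :=
        mem_interior_iff_mem_nhds.mp h1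
      obtain ⟨ρ, hρ, hball⟩ := Metric.mem_nhds_iff.mp h2
      obtain ⟨r₀, hr₀, hcont⟩ := Metric.continuousAt_iff.mp (hf.continuousAt (x := p))
        (ρ / 2) (by positivity)
      refine ⟨min r₀ (δ / 2), ρ, lt_min hr₀ (by positivity), hρ, fun _ =>
        ⟨min_le_right _ _, fun x hx => hcont (lt_of_lt_of_le hx (min_le_left _ _)), hball⟩⟩
    · exact ⟨1, 1, one_pos, one_pos, fun h => absurd h hp⟩
  choose r ρ hr hρ hprop using key
  -- finite subcover
  obtain ⟨t, ht, hcover⟩ := (hΛ.isCompact).elim_nhds_subcover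
    (fun p => Metric.ball p (r p)) (fun p _ => Metric.ball_mem_nhds p (hr p))
  have htne : t.Nonempty := by
    obtain ⟨x, hx⟩ := hΛne
    obtain ⟨p, hp, _⟩ := Set.mem_iUnion₂.mp (hcover hx)
    exact ⟨p, hp⟩
  set ν : ℝ := t.inf' htne (fun p => ρ p / (2 * μ)) with hν
  have hνpos : 0 < ν := by
    apply Finset.lt_inf'_iff htne (a := (0:ℝ)) |>.mpr
    intro p _
    have h1 := hρ p
    positivity
  refine ⟨μ, hμ, ν, hνpos, ?_⟩
  intro x hx ε hε hεν z hz
  obtain ⟨p, hpt, hxp⟩ := Set.mem_iUnion₂.mp (hcover hx)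
  have hpΛ : p ∈ Λ := ht p hpt
  obtain ⟨hrδ, hcont, hball⟩ := hprop p hpΛ
  have hxp' : dist x p < r p := hxp
  have hνle : ν ≤ ρ p / (2 * μ) := Finset.inf'_le _ hpt
  have hμε : μ * ε < ρ p / 2 := by
    have : ε < ρ p / (2 * μ) := lt_of_lt_of_le hεν hνle
    calc μ * ε < μ * (ρ p / (2 * μ)) := by
          exact (mul_lt_mul_iff_right₀ hμ0).mpr this
      _ = ρ p / 2 := by field_simp
  have hzfp : dist z (f p) < ρ p := by
    calc dist z (f p) ≤ dist z (f x) + dist (f x) (f p) := dist_triangle _ _ _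
      _ < μ * ε + ρ p / 2 := add_lt_add (Metric.mem_ball.mp hz)
          (hcont x hxp')
      _ ≤ ρ p / 2 + ρ p / 2 := by linarith
      _ = ρ p := by ring
  obtain ⟨y, hy, hfy⟩ := hball (Metric.mem_ball.mp hzfp)
  have hyp : dist y p < δ / 2 := hy
  have hxy : dist x y < δ := by
    calc dist x y ≤ dist x p + dist p y := dist_triangle _ _ _
      _ < r p + δ / 2 := add_lt_add hxp' (by rw [dist_comm]; exact hyp)
      _ ≤ δ / 2 + δ / 2 := by linarith
      _ = δ := by ring
  have hstxy := hst x hx y hxy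
  rw [hfy] at hstxy
  have hdfxz : dist (f x) z < μ * ε := by rw [dist_comm]; exact Metric.mem_ball.mp hz
  have hdxy : dist x y < ε := by
    have : μ * dist x y < μ * ε := lt_of_le_of_lt hstxy hdfxz
    exact lt_of_mul_lt_mul_left this (le_of_lt hμ0)
  exact ⟨y, Metric.mem_ball.mpr (by rw [dist_comm]; exact hdxy), hfy⟩
end

section
/- Let (X,d) be a compact metric space, let f : X → X be continuous, and let Λ ⊆ X be closed. If f is ball expanding on Λ and locally one-to-one on Λ, then f satisfies property (⋆). -/
open Metric Filter Topology Set

theorem stmt3 {X : Type*} [MetricSpace X] [CompactSpace X] (f : X → X)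
    (hf : Continuous f) (Λ : Set X) (hΛ : IsClosed Λ)
    (hball : BallExpandingOn f Λ) (h121 : LocOneToOneOn f Λ) :
    StarProp f Λ := by
  obtain ⟨μ, hμ, ν, hν, hb⟩ := hball
  choose V hVopen hVmem hVinj using h121
  have hcomp : IsCompact Λ := hΛ.isCompact
  have hcov : Λ ⊆ ⋃ x : Λ, V x x.2 := by
    intro x hx; exact mem_iUnion.2 ⟨⟨x, hx⟩, hVmem x hx⟩
  obtain ⟨δ₀, hδ₀, hleb⟩ :=
    lebesgue_number_lemma_of_metric (c := fun i : Λ => V i.1 i.2) hcomp (fun i => hVopen i i.2) hcov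
  refine ⟨min δ₀ ν, lt_min hδ₀ hν, μ, hμ, ?_⟩
  intro x hx y hxy
  by_contra h
  push_neg at h
  have hd : 0 < dist x y := by
    rcases eq_or_ne x y with rfl | hne
    · simp at h
    · exact dist_pos.2 hne
  have hεν : dist x y < ν := lt_of_lt_of_le hxy (min_le_right _ _)
  have hεδ : dist x y < δ₀ := lt_of_lt_of_le hxy (min_le_left _ _)
  have hmem : f y ∈ Metric.ball (f x) (μ * dist x y) := by
    rw [Metric.mem_ball, dist_comm]; exact h
  obtain ⟨z, hz, hfz⟩ := hb x hx (dist x y) hd hεν hmem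
  obtain ⟨i, hi⟩ := hleb x hx
  have hyV : y ∈ V i i.2 := hi (by rw [Metric.mem_ball, dist_comm]; exact hεδ)
  have hzx : dist z x < dist x y := Metric.mem_ball.1 hz
  have hzV : z ∈ V i i.2 := hi (Metric.mem_ball.2 (hzx.trans hεδ))
  have : z = y := hVinj i i.2 hzV hyV hfz
  rw [this, dist_comm] at hzx
  exact lt_irrefl _ hzx
end

section
/- Let (X,d) be a compact metric space, let f : X → X be continuous, and let Λ ⊆ X be closed. If f has s-limit shadowing on Λ, then f has limit shadowing on Λ. -/
open Metric Filter Topology Set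

section Defs

variable {X : Type*} [MetricSpace X]

/-- `x` is a `δ`-pseudo-orbit for `f`. -/
def IsPseudoOrbit (f : X → X) (δ : ℝ) (x : ℕ → X) : Prop :=
  ∀ n : ℕ, dist (f (x n)) (x (n + 1)) < δ

/-- `x` is an asymptotic pseudo-orbit for `f`. -/
def IsAsymptoticOrbit (f : X → X) (x : ℕ → X) : Prop :=
  Filter.Tendsto (fun n => dist (f (x n)) (x (n + 1))) Filter.atTop (nhds 0)

/-- the point `y` `ε`-shadows the sequence `x`. -/
def Shadows (f : X → X) (ε : ℝ) (y : X) (x : ℕ → X) : Prop :=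
  ∀ n : ℕ, dist (f^[n] y) (x n) < ε

/-- the point `y` asymptotically shadows the sequence `x`. -/
def AsympShadows (f : X → X) (y : X) (x : ℕ → X) : Prop :=
  Filter.Tendsto (fun n => dist (f^[n] y) (x n)) Filter.atTop (nhds 0)

/-- `f` has shadowing on `Y`. -/
def ShadowingOn (f : X → X) (Y : Set X) : Prop :=
  ∀ ε > 0, ∃ δ > 0, ∀ x : ℕ → X, (∀ n, x n ∈ Y) → IsPseudoOrbit f δ x →
    ∃ y : X, Shadows f ε y x

/-- `f` has h-shadowing on `Y`. -/
def HShadowingOn (f : X → X) (Y : Set X) : Prop :=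
  ∀ ε > 0, ∃ δ > 0, ∀ (x : ℕ → X) (m : ℕ), (∀ i ≤ m, x i ∈ Y) →
    (∀ i < m, dist (f (x i)) (x (i + 1)) < δ) →
    ∃ y : X, (∀ i < m, dist (f^[i] y) (x i) < ε) ∧ f^[m] y = x m

/-- `f` has limit shadowing on `Y`. -/
def LimitShadowingOn (f : X → X) (Y : Set X) : Prop :=
  ∀ x : ℕ → X, (∀ n, x n ∈ Y) → IsAsymptoticOrbit f x → ∃ y : X, AsympShadows f y x

/-- `f` has s-limit shadowing on `Y`. -/
def SLimitShadowingOn (f : X → X) (Y : Set X) : Prop :=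
  ∀ ε > 0, ∃ δ > 0,
    (∀ x : ℕ → X, (∀ n, x n ∈ Y) → IsPseudoOrbit f δ x → ∃ y : X, Shadows f ε y x) ∧
    (∀ x : ℕ → X, (∀ n, x n ∈ Y) → IsPseudoOrbit f δ x → IsAsymptoticOrbit f x →
      ∃ y : X, Shadows f ε y x ∧ AsympShadows f y x)

end Defs

theorem stmt4 {X : Type*} [MetricSpace X] [CompactSpace X] (f : X → X)
    (hf : Continuous f) (Λ : Set X) (hΛ : IsClosed Λ)
    (hs : SLimitShadowingOn f Λ) :
    LimitShadowingOn f Λ := by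
  intro x hxΛ hx
  obtain ⟨δ, hδ, -, h2⟩ := hs 1 one_pos
  -- W : set of subsequential limits of x
  set W : Set X := {p | ∃ φ : ℕ → ℕ, StrictMono φ ∧ Tendsto (x ∘ φ) atTop (𝓝 p)} with hW
  have hWΛ : ∀ q ∈ W, q ∈ Λ := by
    rintro q ⟨ψ, hψ, hq⟩
    exact hΛ.mem_of_tendsto hq (Filter.Eventually.of_forall fun k => hxΛ _)
  -- f maps W onto W
  have hsurj : ∀ q ∈ W, ∃ r, r ∈ W ∧ f r = q := by
    rintro q ⟨ψ, hψ, hq⟩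
    obtain ⟨r, -, ρ, hρ, hr⟩ :=
      isCompact_univ.tendsto_subseq (x := fun k => x (ψ (k + 1) - 1)) fun k => Set.mem_univ _
    have hψ1 : ∀ m : ℕ, 1 ≤ ψ (m + 1) := fun m =>
      le_trans (Nat.succ_le_succ (Nat.zero_le m)) hψ.le_apply
    have hσ : StrictMono (fun k => ψ (ρ k + 1) - 1) := by
      intro a b hab
      have h1 : ψ (ρ a + 1) < ψ (ρ b + 1) := hψ (Nat.succ_lt_succ (hρ hab))
      exact Nat.sub_lt_sub_right (hψ1 (ρ a)) h1
    have hrW : r ∈ W := ⟨fun k => ψ (ρ k + 1) - 1, hσ, hr⟩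
    refine ⟨r, hrW, ?_⟩
    have h1 : Tendsto (fun k => f (x (ψ (ρ k + 1) - 1))) atTop (𝓝 (f r)) :=
      (hf.tendsto r).comp hr
    have hσtop : Tendsto (fun k => ψ (ρ k + 1) - 1) atTop atTop := hσ.tendsto_atTop
    have h2' : Tendsto
        (fun k => dist (f (x (ψ (ρ k + 1) - 1))) (x (ψ (ρ k + 1) - 1 + 1))) atTop (𝓝 0) :=
      hx.comp hσtop
    have h3 : Tendsto (fun k => x (ψ (ρ k + 1) - 1 + 1)) atTop (𝓝 (f r)) :=
      h1.congr_dist h2'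
    have heq : ∀ k, ψ (ρ k + 1) - 1 + 1 = ψ (ρ k + 1) := fun k =>
      Nat.sub_add_cancel (hψ1 (ρ k))
    have h3' : Tendsto (fun k => x (ψ (ρ k + 1))) atTop (𝓝 (f r)) := by
      refine h3.congr fun k => by rw [heq]
    have h4 : Tendsto (fun k => x (ψ (ρ k + 1))) atTop (𝓝 q) :=
      hq.comp ((tendsto_add_atTop_nat 1).comp hρ.tendsto_atTop)
    exact tendsto_nhds_unique h3' h4
  -- a choice function for preimages inside W
  have hsurj' : ∀ q : X, ∃ r : X, q ∈ W → (r ∈ W ∧ f r = q) := by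
    intro q
    by_cases h : q ∈ W
    · obtain ⟨r, hr⟩ := hsurj q h
      exact ⟨r, fun _ => hr⟩
    · exact ⟨q, fun h' => absurd h' h⟩
  choose F hF using hsurj'
  -- a cluster point p of x
  obtain ⟨p, -, φ, hφ, hxφ⟩ := isCompact_univ.tendsto_subseq (x := x) fun n => Set.mem_univ _
  have hpW : p ∈ W := ⟨φ, hφ, hxφ⟩
  have hcW : ∀ k : ℕ, F^[k] p ∈ W := by
    intro k
    induction k with
    | zero => exact hpW
    | succ k ih => rw [Function.iterate_succ_apply']; exact (hF _ ih).1
  have hcf : ∀ k : ℕ, f (F^[k + 1] p) = F^[k] p := by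
    intro k
    rw [Function.iterate_succ_apply']
    exact (hF _ (hcW k)).2
  -- choose N
  have hev : ∀ᶠ n in atTop, dist (f (x n)) (x (n + 1)) < δ := hx.eventually_lt_const hδ
  obtain ⟨N₀, hN₀⟩ := eventually_atTop.mp hev
  have hev2 : ∀ᶠ k in atTop, dist (x (φ k)) p < δ := by
    have := hxφ.eventually (Metric.ball_mem_nhds p hδ)
    exact this.mono fun k hk => hk
  obtain ⟨K₁, hK₁⟩ := eventually_atTop.mp hev2
  set N : ℕ := φ (max K₁ N₀) with hNdef
  have hNN₀ : N₀ ≤ N := le_trans (le_max_right K₁ N₀) hφ.le_apply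
  have hNp : dist (x N) p < δ := hK₁ _ (le_max_left K₁ N₀)
  -- the modified sequence
  set w : ℕ → X := fun n => if n < N then F^[N - n] p else x n with hwdef
  have hwhead : ∀ n, n < N → w n = F^[N - n] p := fun n h => if_pos h
  have hwtail : ∀ n, N ≤ n → w n = x n := fun n h => if_neg (not_lt.mpr h)
  have hwΛ : ∀ n, w n ∈ Λ := by
    intro n
    by_cases h : n < N
    · rw [hwhead n h]; exact hWΛ _ (hcW _)
    · rw [hwtail n (not_lt.mp h)]; exact hxΛ n
  have hwpseudo : IsPseudoOrbit f δ w := by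
    intro n
    rcases lt_trichotomy (n + 1) N with h | h | h
    · have hn : n < N := lt_trans (Nat.lt_succ_self n) h
      rw [hwhead n hn, hwhead (n + 1) h]
      have : N - n = (N - (n + 1)) + 1 := by omega
      rw [this, hcf, dist_self]
      exact hδ
    · have hn : n < N := by omega
      rw [hwhead n hn, hwtail (n + 1) h.ge]
      have : N - n = 1 := by omega
      rw [this, hcf 0, Function.iterate_zero_apply, h, dist_comm]
      exact hNp
    · have hn : N ≤ n := by omega
      rw [hwtail n hn, hwtail (n + 1) (by omega)]
      exact hN₀ n (le_trans hNN₀ hn)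
  have hwasym : IsAsymptoticOrbit f w := by
    refine hx.congr' ?_
    filter_upwards [eventually_ge_atTop N] with n hn
    rw [hwtail n hn, hwtail (n + 1) (by omega)]
  obtain ⟨y, -, hyA⟩ := h2 w hwΛ hwpseudo hwasym
  refine ⟨y, ?_⟩
  refine hyA.congr' ?_
  filter_upwards [eventually_ge_atTop N] with n hn
  rw [hwtail n hn]
end

section
/- Let (X,d) be a compact metric space, let f : X → X be continuous, and let Λ ⊆ X be closed. If there is an open set U with Λ ⊆ U such that f has h-shadowing on U, then f has s-limit shadowing on Λ. -/
open Metric Filter Topology Set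

theorem stmt5 {X : Type*} [MetricSpace X] [CompactSpace X] (f : X → X)
    (hf : Continuous f) (Λ : Set X) (hΛ : IsClosed Λ)
    (U : Set X) (hU : IsOpen U) (hΛU : Λ ⊆ U)
    (hh : HShadowingOn f U) :
    SLimitShadowingOn f Λ := by
  intro ε hε
  obtain ⟨η, hη, hthick⟩ := hΛ.isCompact.exists_thickening_subset_open hU hΛU
  set ε₀ := min ε η with hε₀def
  have hε₀ : 0 < ε₀ := lt_min hε hη
  have hε₀ε : ε₀ ≤ ε := min_le_left _ _
  have hε₀η : ε₀ ≤ η := min_le_right _ _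
  have hhalf : ∀ m : ℕ, ε₀ / 2 ^ (m + 1) + ε₀ / 2 ^ (m + 1) = ε₀ / 2 ^ m := by
    intro m; rw [pow_succ]; ring
  have hdpos : ∀ m : ℕ, (0 : ℝ) < ε₀ / 2 ^ m := fun m => by positivity
  have hdmono : ∀ {a b : ℕ}, a ≤ b → ε₀ / 2 ^ b ≤ ε₀ / 2 ^ a := by
    intro a b hab
    gcongr
    exact one_le_two
  choose δ hδpos hδ using fun k : ℕ => hh (ε₀ / 2 ^ (k + 2)) (hdpos (k + 2))
  refine ⟨δ 0, hδpos 0, ?_, ?_⟩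
  · -- plain shadowing of infinite pseudo-orbits
    intro x hxΛ hpo
    have key : ∀ m : ℕ, ∃ y, ∀ i < m, dist (f^[i] y) (x i) < ε₀ / 2 ^ 2 := by
      intro m
      obtain ⟨y, hy1, -⟩ := hδ 0 x m (fun i _ => hΛU (hxΛ i)) (fun i _ => hpo i)
      exact ⟨y, hy1⟩
    choose ys hys using key
    obtain ⟨y, -, φ, hφ, hlim⟩ := isCompact_univ.tendsto_subseq (fun m => mem_univ (ys m))
    refine ⟨y, fun n => ?_⟩
    have hconv : Tendsto (fun k => dist (f^[n] (ys (φ k))) (x n)) atTop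
        (nhds (dist (f^[n] y) (x n))) :=
      (((hf.iterate n).tendsto y).comp hlim).dist tendsto_const_nhds
    have hle : dist (f^[n] y) (x n) ≤ ε₀ / 2 ^ 2 := by
      refine le_of_tendsto hconv ?_
      filter_upwards [eventually_ge_atTop (n + 1)] with k hk
      exact (hys (φ k) n ((Nat.lt_succ_self n).trans_le (hk.trans hφ.le_apply))).le
    have h2 : ε₀ / 2 ^ 2 < ε := by
      have : (2 : ℝ) ^ 2 = 4 := by norm_num
      rw [this]; linarith
    exact lt_of_le_of_lt hle h2
  · -- asymptotic part
    intro x hxΛ hpo hasym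
    choose M hM using fun k : ℕ => Metric.tendsto_atTop.mp hasym (δ (k + 1)) (hδpos (k + 1))
    have herr : ∀ k n, M k ≤ n → dist (f (x n)) (x (n + 1)) < δ (k + 1) := by
      intro k n hn
      have := hM k n hn
      rwa [Real.dist_0_eq_abs, abs_of_nonneg dist_nonneg] at this
    set N : ℕ → ℕ := fun k => Nat.rec (M 0) (fun k Nk => max (Nk + 1) (M (k + 1))) k with hNdef
    have hNlt : ∀ k, N k < N (k + 1) := fun k =>
      lt_of_lt_of_le (Nat.lt_succ_self _) (le_max_left _ _)
    have hNM : ∀ k, M k ≤ N k := by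
      intro k
      cases k with
      | zero => exact le_rfl
      | succ k => exact le_max_right _ _
    have hNsm : StrictMono N := strictMono_nat_of_lt_succ hNlt
    have hex : ∀ i : ℕ, ∃ k, i ≤ N k := fun i => ⟨i, hNsm.le_apply⟩
    set blk : ℕ → ℕ := fun i => Nat.find (hex i) with hblkdef
    have hblk_spec : ∀ i, i ≤ N (blk i) := fun i => Nat.find_spec (hex i)
    have hblk_le : ∀ {i k}, i ≤ N k → blk i ≤ k := fun {i k} h => Nat.find_le h
    have hblk_gt : ∀ {i k}, N k < i → k < blk i := by
      intro i k h
      by_contra hc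
      push_neg at hc
      exact absurd ((hblk_spec i).trans (hNsm.monotone hc)) (not_le.mpr h)
    obtain ⟨B, hBdef⟩ : ∃ B : ℕ → ℕ → ℝ, ∀ j k, B j k = ε₀ / 2 ^ (j + 1) - ε₀ / 2 ^ (k + 2) :=
      ⟨_, fun _ _ => rfl⟩
    have hBpos : ∀ {j k}, j ≤ k → 0 < B j k := by
      intro j k h
      have h2 : ε₀ / 2 ^ (k + 2) < ε₀ / 2 ^ (j + 1) :=
        div_lt_div_of_pos_left hε₀ (by positivity) (pow_lt_pow_right₀ one_lt_two (by omega))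
      rw [hBdef]
      linarith
    have hBlt : ∀ j k, B j k < ε₀ / 2 ^ (j + 1) := by
      intro j k
      have := hdpos (k + 2)
      rw [hBdef]
      linarith
    have hBη : ∀ j k, B j k < η := by
      intro j k
      have h3 : ε₀ / 2 ^ 1 < ε₀ := by
        have h4 : (2 : ℝ) ^ 1 = 2 := by norm_num
        rw [h4]; linarith
      calc B j k < ε₀ / 2 ^ (j + 1) := hBlt j k
        _ ≤ ε₀ / 2 ^ 1 := hdmono (by omega)
        _ < ε₀ := h3
        _ ≤ η := hε₀η
    have hBsucc : ∀ j k, B j k + ε₀ / 2 ^ (k + 3) = B j (k + 1) := by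
      intro j k
      have h1 := hhalf (k + 2)
      rw [show k + 2 + 1 = k + 3 from by omega] at h1
      rw [hBdef, hBdef, show k + 1 + 2 = k + 3 from by omega]
      linarith
    have hBdiag : ∀ k, B (k + 1) (k + 1) = ε₀ / 2 ^ (k + 3) := by
      intro k
      have h1 := hhalf (k + 2)
      rw [show k + 2 + 1 = k + 3 from by omega] at h1
      rw [hBdef, show k + 1 + 1 = k + 2 from by omega, show k + 1 + 2 = k + 3 from by omega]
      linarith
    set P : ℕ → X → Prop := fun k z =>
      (∀ i ≤ N k, dist (f^[i] z) (x i) < B (blk i) k) ∧ f^[N k] z = x (N k) with hPdef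
    -- the base point
    have hbase : ∃ z, P 0 z := by
      obtain ⟨z, hz1, hz2⟩ := hδ 0 x (N 0) (fun i _ => hΛU (hxΛ i)) (fun i _ => hpo i)
      refine ⟨z, fun i hi => ?_, hz2⟩
      have hb : blk i = 0 := Nat.le_antisymm (hblk_le hi) (Nat.zero_le _)
      have hB00 : B 0 0 = ε₀ / 2 ^ 2 := by
        have h1 := hhalf 1
        rw [show (1 : ℕ) + 1 = 2 from rfl] at h1
        rw [hBdef, show (0 : ℕ) + 1 = 1 from rfl, show (0 : ℕ) + 2 = 2 from rfl]
        linarith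
      rw [hb, hB00]
      rcases lt_or_eq_of_le hi with h | h
      · exact hz1 i h
      · rw [h, hz2, dist_self]
        exact hdpos 2
    -- the inductive step
    have hstepkey : ∀ k z, P k z → ∃ z', P (k + 1) z' ∧
        ∀ i ≤ N k, dist (f^[i] z') (f^[i] z) < ε₀ / 2 ^ (k + 3) := by
      intro k z hz
      set w : ℕ → X := fun i => if i ≤ N k then f^[i] z else x i with hw
      have hwU : ∀ i ≤ N (k + 1), w i ∈ U := by
        intro i _
        by_cases h : i ≤ N k
        · have h1 : dist (f^[i] z) (x i) < η := lt_trans (hz.1 i h) (hBη (blk i) k)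
          have h2 : f^[i] z ∈ thickening η Λ :=
            Metric.mem_thickening_iff.mpr ⟨x i, hxΛ i, h1⟩
          simpa only [w, if_pos h] using hthick h2
        · simpa only [w, if_neg h] using hΛU (hxΛ i)
      have hwpo : ∀ i < N (k + 1), dist (f (w i)) (w (i + 1)) < δ (k + 1) := by
        intro i _
        by_cases h1 : i + 1 ≤ N k
        · have h0 : i ≤ N k := by omega
          have heq : f (w i) = w (i + 1) := by
            simp only [w, if_pos h0, if_pos h1, ← Function.iterate_succ_apply' f i z]
          rw [heq, dist_self]
          exact hδpos (k + 1)
        · by_cases h2 : i ≤ N k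
          · have hik : i = N k := by omega
            have hwi : w i = x i := by
              simp only [w, hik]
              rw [if_pos le_rfl]
              exact hz.2
            have hwi1 : w (i + 1) = x (i + 1) := by simp only [w, if_neg h1]
            rw [hwi, hwi1]
            exact herr k i (by rw [hik]; exact hNM k)
          · have hwi : w i = x i := by simp only [w, if_neg h2]
            have hwi1 : w (i + 1) = x (i + 1) := by
              simp only [w]
              rw [if_neg (by omega)]
            rw [hwi, hwi1]
            exact herr k i (le_trans (hNM k) (by omega))
      obtain ⟨z', hz'1, hz'2⟩ := hδ (k + 1) w (N (k + 1)) hwU hwpo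
      have hz'w : ∀ i ≤ N k, dist (f^[i] z') (f^[i] z) < ε₀ / 2 ^ (k + 3) := by
        intro i hi
        have h := hz'1 i (lt_of_le_of_lt hi (hNlt k))
        rw [show w i = f^[i] z from by simp only [w, if_pos hi]] at h
        have e2 : k + 1 + 2 = k + 3 := by omega
        rwa [e2] at h
      have hend : f^[N (k + 1)] z' = x (N (k + 1)) := by
        rw [hz'2]
        simp only [w]
        rw [if_neg (not_le.mpr (hNlt k))]
      refine ⟨z', ⟨?_, hend⟩, hz'w⟩
      intro i hi
      rcases le_or_gt i (N k) with h | h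
      · have ht : dist (f^[i] z') (x i) < ε₀ / 2 ^ (k + 3) + B (blk i) k :=
          lt_of_le_of_lt (dist_triangle (f^[i] z') (f^[i] z) (x i))
            (add_lt_add (hz'w i h) (hz.1 i h))
        calc dist (f^[i] z') (x i) < ε₀ / 2 ^ (k + 3) + B (blk i) k := ht
          _ = B (blk i) (k + 1) := by rw [add_comm]; exact hBsucc (blk i) k
      · rcases lt_or_eq_of_le hi with h2 | h2
        · have hb : blk i = k + 1 := le_antisymm (hblk_le hi) (hblk_gt h)
          have hd := hz'1 i h2
          rw [show w i = x i from by simp only [w]; rw [if_neg (not_le.mpr h)]] at hd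
          rw [hb, hBdiag k]
          have e2 : k + 1 + 2 = k + 3 := by omega
          rwa [e2] at hd
        · rw [h2, hend, dist_self]
          exact hBpos (hblk_le le_rfl)
    -- build the sequence of approximating points
    obtain ⟨z₀, hz₀⟩ := hbase
    choose! step hstepP hstepC using hstepkey
    set Y : ℕ → X := fun k => Nat.rec z₀ (fun k z => step k z) k with hYdef
    have hYP : ∀ k, P k (Y k) := by
      intro k
      induction k with
      | zero => exact hz₀
      | succ k ih => exact hstepP k (Y k) ih
    have hYC : ∀ k, ∀ i ≤ N k, dist (f^[i] (Y (k + 1))) (f^[i] (Y k)) < ε₀ / 2 ^ (k + 3) :=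
      fun k => hstepC k (Y k) (hYP k)
    -- the sequence Y is Cauchy
    have hcauchy : CauchySeq Y := by
      apply cauchySeq_of_le_geometric (1 / 2 : ℝ) (ε₀ / 8) (by norm_num)
      intro n
      have h := hYC n 0 (Nat.zero_le _)
      simp only [Function.iterate_zero_apply] at h
      rw [dist_comm] at h
      have : ε₀ / 2 ^ (n + 3) = ε₀ / 8 * (1 / 2) ^ n := by
        rw [div_pow, one_pow, pow_add]
        ring
      rw [this] at h
      exact h.le
    obtain ⟨y, hy⟩ := cauchySeq_tendsto_of_complete hcauchy
    -- tail estimate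
    have htail : ∀ i k, i ≤ N k → dist (f^[i] (Y k)) (f^[i] y) ≤ ε₀ / 2 ^ (k + 2) := by
      intro i k hik
      have hstepbd : ∀ m : ℕ, dist (f^[i] (Y k)) (f^[i] (Y (k + m))) ≤
          ε₀ / 2 ^ (k + 2) - ε₀ / 2 ^ (k + 2 + m) := by
        intro m
        induction m with
        | zero => simp
        | succ m ih =>
          have h1 : i ≤ N (k + m) := hik.trans (hNsm.monotone (by omega))
          have h2 := hYC (k + m) i h1
          rw [dist_comm] at h2
          have h3 : dist (f^[i] (Y k)) (f^[i] (Y (k + (m + 1)))) ≤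
              dist (f^[i] (Y k)) (f^[i] (Y (k + m))) + dist (f^[i] (Y (k + m))) (f^[i] (Y (k + m + 1))) := by
            rw [show k + (m + 1) = k + m + 1 from by omega]
            exact dist_triangle _ _ _
          have h4 := hhalf (k + 2 + m)
          rw [show k + 2 + m + 1 = k + m + 3 from by omega] at h4
          rw [show k + 2 + (m + 1) = k + m + 3 from by omega]
          linarith
      have hconv : Tendsto (fun m => dist (f^[i] (Y k)) (f^[i] (Y (k + m)))) atTop
          (nhds (dist (f^[i] (Y k)) (f^[i] y))) := by
        have h0 : Tendsto (fun m => k + m) atTop atTop :=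
          tendsto_atTop_mono (fun m => Nat.le_add_left m k) tendsto_id
        have h1 : Tendsto (fun m => Y (k + m)) atTop (nhds y) := hy.comp h0
        exact tendsto_const_nhds.dist (((hf.iterate i).tendsto y).comp h1)
      refine le_of_tendsto hconv ?_
      filter_upwards with m
      have h5 := hdpos (k + 2 + m)
      linarith [hstepbd m]
    -- the final bounds
    have hfinal : ∀ n : ℕ, dist (f^[n] y) (x n) < ε₀ / 2 ^ (blk n + 1) := by
      intro n
      have h1 : dist (f^[n] (Y (blk n))) (x n) < B (blk n) (blk n) := (hYP (blk n)).1 n (hblk_spec n)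
      have h2 : dist (f^[n] (Y (blk n))) (f^[n] y) ≤ ε₀ / 2 ^ (blk n + 2) :=
        htail n (blk n) (hblk_spec n)
      have h3 : dist (f^[n] y) (x n) ≤ dist (f^[n] y) (f^[n] (Y (blk n))) + dist (f^[n] (Y (blk n))) (x n) :=
        dist_triangle _ _ _
      have h5 : dist (f^[n] y) (f^[n] (Y (blk n))) = dist (f^[n] (Y (blk n))) (f^[n] y) :=
        dist_comm _ _
      have h4 := hBdef (blk n) (blk n)
      linarith
    refine ⟨y, fun n => ?_, ?_⟩
    · have h1 := hfinal n
      have h2 : ε₀ / 2 ^ (blk n + 1) ≤ ε₀ / 2 ^ 1 := hdmono (by omega)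
      have h3 : ε₀ / 2 ^ 1 < ε := by
        have : (2 : ℝ) ^ 1 = 2 := by norm_num
        rw [this]; linarith
      linarith
    · show Tendsto (fun n => dist (f^[n] y) (x n)) atTop (nhds 0)
      rw [Metric.tendsto_atTop]
      intro ρ hρ
      obtain ⟨K, hK⟩ : ∃ K : ℕ, ε₀ / ρ < 2 ^ K := pow_unbounded_of_one_lt (ε₀ / ρ) one_lt_two
      have hεK : ε₀ / 2 ^ K < ρ := by
        rw [div_lt_iff₀ (by positivity)]
        rw [div_lt_iff₀ hρ] at hK
        linarith
      refine ⟨N K + 1, fun n hn => ?_⟩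
      have hbn : K < blk n := hblk_gt (by omega)
      have h1 := hfinal n
      have h2 : ε₀ / 2 ^ (blk n + 1) ≤ ε₀ / 2 ^ K := hdmono (by omega)
      rw [Real.dist_0_eq_abs, abs_of_nonneg dist_nonneg]
      linarith
end

section
/- Let (X,d) be a compact metric space, let f : X → X be continuous, and let Λ ⊆ X be closed and invariant (f(Λ) ⊆ Λ). If the restriction of f to Λ has h-shadowing (as a map of the compact metric space Λ), then the restriction of f to Λ has s-limit shadowing and limit shadowing. -/
open Metric Filter Topology Set

section Aux

variable {A : Type*} [MetricSpace A] [CompactSpace A] {g : A → A}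

private lemma hshadow_spec (hh : HShadowingOn g Set.univ) {ε : ℝ} (hε : 0 < ε) :
    ∃ δ > 0, ∀ (x : ℕ → A) (m : ℕ),
      (∀ i < m, dist (g (x i)) (x (i + 1)) < δ) →
      ∃ y : A, (∀ i < m, dist (g^[i] y) (x i) < ε) ∧ g^[m] y = x m := by
  obtain ⟨δ, hδ, H⟩ := hh ε hε
  exact ⟨δ, hδ, fun x m hx => H x m (fun i _ => Set.mem_univ _) hx⟩

private lemma exists_block {N : ℕ → ℕ} (hN : StrictMono N) {k n : ℕ} (h : N k ≤ n) :
    ∃ j, k ≤ j ∧ N j ≤ n ∧ n < N (j + 1) := by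
  classical
  set P : ℕ → Prop := fun j => N j ≤ n with hP
  have hPk : P k := h
  have hkn : k ≤ n := le_trans hN.le_apply h
  refine ⟨Nat.findGreatest P n, Nat.le_findGreatest hkn hPk,
    Nat.findGreatest_spec hkn hPk, ?_⟩
  by_contra hcon
  push_neg at hcon
  have h1 : P (Nat.findGreatest P n + 1) := hcon
  have h2 : Nat.findGreatest P n + 1 ≤ n := le_trans hN.le_apply hcon
  have := Nat.le_findGreatest h2 h1
  omega

private lemma shadowing_of_h (hg : Continuous g) (hh : HShadowingOn g Set.univ) :
    ∀ ε : ℝ, 0 < ε → ∃ δ > 0, ∀ x : ℕ → A, IsPseudoOrbit g δ x →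
      ∃ y, Shadows g ε y x := by
  intro ε hε
  obtain ⟨δ, hδ, H⟩ := hshadow_spec hh (half_pos hε)
  refine ⟨δ, hδ, fun x hx => ?_⟩
  have hy : ∀ m : ℕ, ∃ y : A, ∀ i < m, dist (g^[i] y) (x i) < ε / 2 := by
    intro m
    obtain ⟨y, hy1, -⟩ := H x m (fun i _ => hx i)
    exact ⟨y, hy1⟩
  choose ys hys using hy
  obtain ⟨y, φ, hφ, hconv⟩ := CompactSpace.tendsto_subseq ys
  refine ⟨y, fun n => ?_⟩
  have h1 : Filter.Tendsto (fun j => dist (g^[n] (ys (φ j))) (x n)) Filter.atTop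
      (nhds (dist (g^[n] y) (x n))) :=
    (((hg.iterate n).tendsto y).comp hconv).dist tendsto_const_nhds
  have h2 : ∀ᶠ j in Filter.atTop, dist (g^[n] (ys (φ j))) (x n) ≤ ε / 2 := by
    filter_upwards [Filter.eventually_ge_atTop (n + 1)] with j hj
    exact (hys (φ j) n (lt_of_lt_of_le (Nat.lt_of_lt_of_le (Nat.lt_succ_self n) hj)
      hφ.le_apply)).le
  have := le_of_tendsto h1 h2
  linarith

private lemma slimit_part2 (hg : Continuous g) (hh : HShadowingOn g Set.univ) :
    ∀ ε : ℝ, 0 < ε → ∃ δ > 0, ∀ x : ℕ → A, IsPseudoOrbit g δ x → IsAsymptoticOrbit g x →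
      ∃ y, Shadows g ε y x ∧ AsympShadows g y x := by
  classical
  intro ε hε
  have he : ∀ k : ℕ, 0 < ε / 2 ^ (k + 2) := fun k => by positivity
  choose D hD HD using fun k : ℕ => hshadow_spec hh (he k)
  refine ⟨D 0, hD 0, fun x hx hax => ?_⟩
  have hM : ∀ k : ℕ, ∃ M : ℕ, ∀ n ≥ M, dist (g (x n)) (x (n + 1)) < D k := by
    intro k
    exact Filter.eventually_atTop.mp (hax.eventually (gt_mem_nhds (hD k)))
  choose M hMspec using hM
  obtain ⟨N, hN0, hNsucc⟩ : ∃ N : ℕ → ℕ, N 0 = 0 ∧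
      ∀ k, N (k + 1) = max (N k + 1) (M (k + 1)) :=
    ⟨fun k => Nat.rec 0 (fun k ih => max (ih + 1) (M (k + 1))) k, rfl, fun k => rfl⟩
  have hNmono : StrictMono N := strictMono_nat_of_lt_succ (fun k => by
    rw [hNsucc]
    exact lt_of_lt_of_le (Nat.lt_succ_self _) (le_max_left _ _))
  have key : ∀ k n, N k ≤ n → dist (g (x n)) (x (n + 1)) < D k := by
    intro k n hn
    cases k with
    | zero => exact hx n
    | succ k =>
      refine hMspec (k + 1) n (le_trans ?_ hn)
      rw [hNsucc]
      exact le_max_right _ _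
  obtain ⟨y0, hy0a, hy0b⟩ := HD 0 x (N 1) (fun i _ => hx i)
  have step : ∀ k (y : A), g^[N (k + 1)] y = x (N (k + 1)) →
      ∃ y' : A, g^[N (k + 2)] y' = x (N (k + 2)) ∧
        (∀ i ≤ N (k + 1), dist (g^[i] y') (g^[i] y) < ε / 2 ^ (k + 1 + 2)) ∧
        (∀ i, N (k + 1) ≤ i → i < N (k + 2) → dist (g^[i] y') (x i) < ε / 2 ^ (k + 1 + 2)) := by
    intro k y hy
    set w : ℕ → A := fun i => if i ≤ N (k + 1) then g^[i] y else x i with hw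
    have hwg : ∀ i, i ≤ N (k + 1) → w i = g^[i] y := by
      intro i hi; simp only [hw]; rw [if_pos hi]
    have hwx : ∀ i, N (k + 1) ≤ i → w i = x i := by
      intro i hi
      by_cases h : i ≤ N (k + 1)
      · have hieq : i = N (k + 1) := le_antisymm h hi
        rw [hwg i h, hieq, hy]
      · simp only [hw]; rw [if_neg h]
    have hwerr : ∀ i, i < N (k + 2) → dist (g (w i)) (w (i + 1)) < D (k + 1) := by
      intro i _
      by_cases h : i + 1 ≤ N (k + 1)
      · have h' : i ≤ N (k + 1) := le_trans (Nat.le_succ i) h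
        rw [hwg i h', hwg (i + 1) h, Function.iterate_succ_apply' g i y]
        simpa using hD (k + 1)
      · push_neg at h
        have h3 : N (k + 1) ≤ i := Nat.lt_succ_iff.mp h
        rw [hwx i h3, hwx (i + 1) (le_trans h3 (Nat.le_succ i))]
        exact key (k + 1) i h3
    obtain ⟨y', h1, h2⟩ := HD (k + 1) w (N (k + 2)) hwerr
    have hNlt : N (k + 1) < N (k + 2) := hNmono (Nat.lt_succ_self (k + 1))
    have hend : w (N (k + 2)) = x (N (k + 2)) := hwx _ hNlt.le
    refine ⟨y', by rw [h2, hend], ?_, ?_⟩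
    · intro i hi
      have := h1 i (lt_of_le_of_lt hi hNlt)
      rwa [hwg i hi] at this
    · intro i hi1 hi2
      have := h1 i hi2
      rwa [hwx i hi1] at this
  choose st hst1 hst2 hst3 using step
  obtain ⟨Z, hZ0, hZs⟩ : ∃ Z : ℕ → A, Z 0 = y0 ∧ ∀ k, Z (k + 1) =
      if h : g^[N (k + 1)] (Z k) = x (N (k + 1)) then st k (Z k) h else Z k :=
    ⟨fun k => Nat.rec y0
      (fun k ih => if h : g^[N (k + 1)] ih = x (N (k + 1)) then st k ih h else ih) k,
      rfl, fun k => rfl⟩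
  have hZend : ∀ k, g^[N (k + 1)] (Z k) = x (N (k + 1)) := by
    intro k
    induction k with
    | zero => rw [hZ0]; exact hy0b
    | succ k ih =>
      rw [hZs k, dif_pos ih]
      exact hst1 k (Z k) ih
  have hZs' : ∀ k, Z (k + 1) = st k (Z k) (hZend k) := by
    intro k
    rw [hZs k, dif_pos (hZend k)]
  have rel1 : ∀ k, ∀ i ≤ N (k + 1),
      dist (g^[i] (Z (k + 1))) (g^[i] (Z k)) < ε / 2 ^ (k + 1 + 2) := by
    intro k
    rw [hZs' k]
    exact hst2 k (Z k) (hZend k)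
  have rel2 : ∀ k, ∀ i, N (k + 1) ≤ i → i < N (k + 2) →
      dist (g^[i] (Z (k + 1))) (x i) < ε / 2 ^ (k + 1 + 2) := by
    intro k
    rw [hZs' k]
    exact hst3 k (Z k) (hZend k)
  have tele : ∀ k m, k ≤ m → ∀ i, i ≤ N (k + 1) →
      dist (g^[i] (Z m)) (g^[i] (Z k)) ≤ ε / 2 ^ (k + 2) - ε / 2 ^ (m + 2) := by
    intro k m hkm
    induction m, hkm using Nat.le_induction with
    | base => intro i _; simp
    | succ m hkm ih =>
      intro i hi
      have hiN : i ≤ N (m + 1) := le_trans hi (hNmono.monotone (by omega))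
      have t1 := rel1 m i hiN
      have t2 := ih i hi
      have hpow : (2:ℝ) ^ (m + 1 + 2) = 2 ^ (m + 2) * 2 := by
        rw [show m + 1 + 2 = (m + 2) + 1 by omega, pow_succ]
      have hsum : ε / 2 ^ (m + 1 + 2) + ε / 2 ^ (m + 1 + 2) = ε / 2 ^ (m + 2) := by
        rw [hpow, ← div_div]
        exact add_halves _
      have htri := dist_triangle (g^[i] (Z (m + 1))) (g^[i] (Z m)) (g^[i] (Z k))
      linarith
  obtain ⟨y, φ, hφ, hconv⟩ := CompactSpace.tendsto_subseq (fun m => Z m)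
  have hyZ : ∀ k, ∀ i, i ≤ N (k + 1) → dist (g^[i] y) (g^[i] (Z k)) ≤ ε / 2 ^ (k + 2) := by
    intro k i hi
    have h1 : Filter.Tendsto (fun j => dist (g^[i] (Z (φ j))) (g^[i] (Z k))) Filter.atTop
        (nhds (dist (g^[i] y) (g^[i] (Z k)))) :=
      (((hg.iterate i).tendsto y).comp hconv).dist tendsto_const_nhds
    refine le_of_tendsto h1 ?_
    filter_upwards [Filter.eventually_ge_atTop k] with j hj
    have hkj : k ≤ φ j := le_trans hj hφ.le_apply
    have := tele k (φ j) hkj i hi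
    have hpos : 0 < ε / 2 ^ (φ j + 2) := he (φ j)
    linarith
  have hblock : ∀ k, ∀ i, N k ≤ i → i < N (k + 1) →
      dist (g^[i] y) (x i) ≤ ε / 2 ^ (k + 1) := by
    intro k i hik hik2
    have h1 : dist (g^[i] y) (g^[i] (Z k)) ≤ ε / 2 ^ (k + 2) := hyZ k i hik2.le
    have h2 : dist (g^[i] (Z k)) (x i) < ε / 2 ^ (k + 2) := by
      cases k with
      | zero => rw [hZ0]; exact hy0a i hik2
      | succ k => exact rel2 k i hik hik2
    have hpow : ε / 2 ^ (k + 2) + ε / 2 ^ (k + 2) = ε / 2 ^ (k + 1) := by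
      rw [show k + 2 = (k + 1) + 1 by omega, pow_succ, ← div_div]
      exact add_halves _
    have htri := dist_triangle (g^[i] y) (g^[i] (Z k)) (x i)
    linarith
  have hmono : ∀ a b : ℕ, a ≤ b → ε / 2 ^ b ≤ ε / 2 ^ a := by
    intro a b hab
    rw [← mul_one_div ε ((2:ℝ) ^ b), ← mul_one_div ε ((2:ℝ) ^ a)]
    exact mul_le_mul_of_nonneg_left (one_div_pow_le_one_div_pow_of_le one_le_two hab) hε.le
  have hhalf : ∀ k : ℕ, ε / 2 ^ (k + 1) ≤ ε / 2 := by
    intro k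
    simpa using hmono 1 (k + 1) (by omega)
  refine ⟨y, ?_, ?_⟩
  · intro n
    have hn0 : N 0 ≤ n := by rw [hN0]; exact Nat.zero_le n
    obtain ⟨j, -, hj1, hj2⟩ := exists_block hNmono hn0
    have hb := hblock j n hj1 hj2
    have hhj := hhalf j
    linarith
  · have T : Filter.Tendsto (fun k : ℕ => ε * (1 / 2 : ℝ) ^ k) Filter.atTop (nhds 0) := by
      simpa using (tendsto_pow_atTop_nhds_zero_of_lt_one (by norm_num : (0:ℝ) ≤ 1 / 2)
        (by norm_num : (1 / 2 : ℝ) < 1)).const_mul ε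
    refine Metric.tendsto_atTop.2 fun η hη => ?_
    obtain ⟨k, hk⟩ := (T.eventually (gt_mem_nhds hη)).exists
    refine ⟨N k, fun n hn => ?_⟩
    obtain ⟨j, hjk, hj1, hj2⟩ := exists_block hNmono hn
    have hb := hblock j n hj1 hj2
    have hle : ε / 2 ^ (j + 1) ≤ ε * (1 / 2 : ℝ) ^ k := by
      rw [div_pow, one_pow, mul_one_div]
      exact hmono k (j + 1) (by omega)
    have habs : dist (dist (g^[n] y) (x n)) 0 = dist (g^[n] y) (x n) := by
      rw [dist_zero_right, Real.norm_eq_abs]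
      exact abs_of_nonneg dist_nonneg
    rw [habs]
    linarith

private lemma slimit_of_h (hg : Continuous g) (hh : HShadowingOn g Set.univ) :
    SLimitShadowingOn g Set.univ := by
  intro ε hε
  obtain ⟨δ1, hδ1, H1⟩ := shadowing_of_h hg hh ε hε
  obtain ⟨δ2, hδ2, H2⟩ := slimit_part2 hg hh ε hε
  refine ⟨min δ1 δ2, lt_min hδ1 hδ2, ?_, ?_⟩
  · exact fun x _ hx => H1 x (fun n => lt_of_lt_of_le (hx n) (min_le_left _ _))
  · exact fun x _ hx hax => H2 x (fun n => lt_of_lt_of_le (hx n) (min_le_right _ _)) hax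

private lemma limit_of_h (hg : Continuous g) (hh : HShadowingOn g Set.univ) :
    LimitShadowingOn g Set.univ := by
  classical
  intro x _ hax
  obtain ⟨δ, hδ, H⟩ := slimit_part2 hg hh 1 one_pos
  obtain ⟨p, φ, hφ, hconv⟩ := CompactSpace.tendsto_subseq x
  set ω : Set A :=
    {q | ∃ ψ : ℕ → ℕ, StrictMono ψ ∧ Filter.Tendsto (fun j => x (ψ j)) Filter.atTop (nhds q)}
    with hω
  have hp : p ∈ ω := ⟨φ, hφ, hconv⟩
  have hsurj : ∀ q ∈ ω, ∃ q' ∈ ω, g q' = q := by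
    rintro q ⟨ψ, hψ, hq⟩
    obtain ⟨q', σ, hσ, hq'⟩ := CompactSpace.tendsto_subseq (fun j => x (ψ (j + 1) - 1))
    have hψ1 : ∀ j : ℕ, 1 ≤ ψ (j + 1) := fun j =>
      le_trans (by omega) (hψ.le_apply : j + 1 ≤ ψ (j + 1))
    have hsub1 : ∀ j, (ψ (σ j + 1) - 1) + 1 = ψ (σ j + 1) := fun j =>
      Nat.succ_pred_eq_of_pos (hψ1 (σ j))
    refine ⟨q', ⟨fun j => ψ (σ j + 1) - 1, ?_, hq'⟩, ?_⟩
    · intro a b hab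
      have h1 : σ a < σ b := hσ hab
      have h2 : ψ (σ a + 1) < ψ (σ b + 1) := hψ (by omega)
      have h3 := hψ1 (σ a)
      show ψ (σ a + 1) - 1 < ψ (σ b + 1) - 1
      omega
    · -- g q' = q
      have t1 : Filter.Tendsto (fun j => g (x (ψ (σ j + 1) - 1))) Filter.atTop (nhds (g q')) :=
        (hg.tendsto q').comp hq'
      have hm : Filter.Tendsto (fun j => ψ (σ j + 1) - 1) Filter.atTop Filter.atTop := by
        apply Filter.tendsto_atTop_mono (fun j => ?_) Filter.tendsto_id
        have h1 : σ j + 1 ≤ ψ (σ j + 1) := hψ.le_apply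
        have h2 : j ≤ σ j := hσ.le_apply
        show id j ≤ ψ (σ j + 1) - 1
        simp only [id_eq]
        omega
      have t2 : Filter.Tendsto
          (fun j => dist (g (x (ψ (σ j + 1) - 1))) (x (ψ (σ j + 1)))) Filter.atTop (nhds 0) := by
        have := hax.comp hm
        refine this.congr fun j => ?_
        simp only [Function.comp]
        rw [hsub1 j]
      have t3 : Filter.Tendsto (fun j => x (ψ (σ j + 1))) Filter.atTop (nhds (g q')) := by
        rw [tendsto_iff_dist_tendsto_zero]
        have hbound : ∀ j, dist (x (ψ (σ j + 1))) (g q') ≤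
            dist (g (x (ψ (σ j + 1) - 1))) (x (ψ (σ j + 1))) +
              dist (g (x (ψ (σ j + 1) - 1))) (g q') := fun j => by
          have := dist_triangle (x (ψ (σ j + 1))) (g (x (ψ (σ j + 1) - 1))) (g q')
          rw [dist_comm (x (ψ (σ j + 1))) (g (x (ψ (σ j + 1) - 1)))] at this
          linarith
        have ht : Filter.Tendsto (fun j => dist (g (x (ψ (σ j + 1) - 1))) (x (ψ (σ j + 1))) +
            dist (g (x (ψ (σ j + 1) - 1))) (g q')) Filter.atTop (nhds 0) := by
          have t1' : Filter.Tendsto (fun j => dist (g (x (ψ (σ j + 1) - 1))) (g q'))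
              Filter.atTop (nhds 0) := tendsto_iff_dist_tendsto_zero.mp t1
          simpa using t2.add t1'
        exact squeeze_zero (fun j => dist_nonneg) hbound ht
      have t4 : Filter.Tendsto (fun j => x (ψ (σ j + 1))) Filter.atTop (nhds q) := by
        have hσ1 : Filter.Tendsto (fun j => σ j + 1) Filter.atTop Filter.atTop := by
          apply Filter.tendsto_atTop_mono (fun j => ?_) Filter.tendsto_id
          have h2 : j ≤ σ j := hσ.le_apply
          show id j ≤ σ j + 1
          simp only [id_eq]
          omega
        exact hq.comp hσ1
      exact tendsto_nhds_unique t3 t4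
  have hsurj' : ∀ q : {z : A // z ∈ ω}, ∃ q' : {z : A // z ∈ ω}, g q'.1 = q.1 := by
    rintro ⟨q, hq⟩
    obtain ⟨q', hq', hgq⟩ := hsurj q hq
    exact ⟨⟨q', hq'⟩, hgq⟩
  choose F hF using hsurj'
  obtain ⟨b, hb0, hbs⟩ : ∃ b : ℕ → {z : A // z ∈ ω}, b 0 = ⟨p, hp⟩ ∧
      ∀ k, b (k + 1) = F (b k) :=
    ⟨fun k => F^[k] ⟨p, hp⟩, rfl, fun k => Function.iterate_succ_apply' F k _⟩
  have hbsucc : ∀ k, g (b (k + 1)).1 = (b k).1 := by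
    intro k
    rw [hbs k]
    exact hF (b k)
  have hepos : (0:ℝ) < δ / 2 := by positivity
  have hcont : Filter.Tendsto (fun j => g (x (φ j))) Filter.atTop (nhds (g p)) :=
    (hg.tendsto p).comp hconv
  have hev1 : ∀ᶠ j in Filter.atTop, dist (g (x (φ j))) (g p) < δ / 2 :=
    Metric.tendsto_nhds.mp hcont (δ / 2) hepos
  obtain ⟨M1, hM1⟩ : ∃ M1 : ℕ, ∀ n ≥ M1, dist (g (x n)) (x (n + 1)) < δ / 2 :=
    Filter.eventually_atTop.mp (hax.eventually (gt_mem_nhds hepos))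
  obtain ⟨j, hj1, hj2⟩ := (hev1.and (Filter.eventually_ge_atTop M1)).exists
  set m : ℕ := φ j with hm
  have hmM1 : M1 ≤ m := le_trans hj2 hφ.le_apply
  set w : ℕ → A := fun i => if i ≤ m then (b (m - i)).1 else x i with hwdef
  have hwtail : ∀ i, m < i → w i = x i := by
    intro i hi
    simp only [hwdef]
    rw [if_neg (Nat.not_le.mpr hi)]
  have hwm : w m = p := by
    simp only [hwdef]
    rw [if_pos (le_refl m), Nat.sub_self, hb0]
  have hwp : IsPseudoOrbit g δ w := by
    intro n
    rcases lt_trichotomy n m with hn | hn | hn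
    · have h1 : n ≤ m := hn.le
      have h2 : n + 1 ≤ m := hn
      have h3 : m - n = (m - (n + 1)) + 1 := by omega
      simp only [hwdef]
      rw [if_pos h1, if_pos h2, h3, hbsucc (m - (n + 1))]
      simpa using hδ
    · have e1 : w n = p := by rw [hn, hwm]
      have e2 : w (n + 1) = x (n + 1) := hwtail (n + 1) (by omega)
      rw [e1, e2]
      have d1 : dist (g p) (g (x m)) < δ / 2 := by
        rw [dist_comm]
        exact hj1
      have d2 : dist (g (x m)) (x (m + 1)) < δ / 2 := hM1 m hmM1
      have htri := dist_triangle (g p) (g (x m)) (x (m + 1))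
      rw [hn]
      linarith
    · rw [hwtail n hn, hwtail (n + 1) (by omega)]
      have := hM1 n (by omega)
      linarith
  have hwa : IsAsymptoticOrbit g w := by
    have heq : ∀ᶠ n in Filter.atTop,
        dist (g (x n)) (x (n + 1)) = dist (g (w n)) (w (n + 1)) := by
      filter_upwards [Filter.eventually_gt_atTop m] with n hn
      rw [hwtail n hn, hwtail (n + 1) (by omega)]
    exact Filter.Tendsto.congr' heq hax
  obtain ⟨y, -, hy2⟩ := H w hwp hwa
  refine ⟨y, ?_⟩
  have heq2 : ∀ᶠ n in Filter.atTop,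
      dist (g^[n] y) (w n) = dist (g^[n] y) (x n) := by
    filter_upwards [Filter.eventually_gt_atTop m] with n hn
    rw [hwtail n hn]
  exact Filter.Tendsto.congr' heq2 hy2

end Aux

theorem stmt6 {X : Type*} [MetricSpace X] [CompactSpace X] (f : X → X)
    (hf : Continuous f) (Λ : Set X) (hΛ : IsClosed Λ)
    (hinv : Set.MapsTo f Λ Λ)
    (hh : HShadowingOn (hinv.restrict f Λ Λ) Set.univ) :
    SLimitShadowingOn (hinv.restrict f Λ Λ) Set.univ ∧
      LimitShadowingOn (hinv.restrict f Λ Λ) Set.univ := by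
  have : CompactSpace Λ := isCompact_iff_compactSpace.mp hΛ.isCompact
  have hg : Continuous (hinv.restrict f Λ Λ) := hf.restrict hinv
  exact ⟨slimit_of_h hg hh, limit_of_h hg hh⟩
end

section
/- Let (X,d) be a compact metric space and let f : X → X be continuous and positively expansive. Then f has shadowing if and only if f has h-shadowing. -/
open Metric Filter Topology Set

section Defs

variable {X : Type*} [MetricSpace X]

/-- `f` is positively expansive. -/
def PositivelyExpansive (f : X → X) : Prop :=
  ∃ b > 0, ∀ x y : X, (∀ n : ℕ, dist (f^[n] x) (f^[n] y) < b) → x = y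

end Defs

theorem stmt10 {X : Type*} [MetricSpace X] [CompactSpace X] (f : X → X)
    (hf : Continuous f) (hexp : PositivelyExpansive f) :
    ShadowingOn f Set.univ ↔ HShadowingOn f Set.univ := by
  constructor
  · intro hs ε hε
    obtain ⟨b, hb, hexp⟩ := hexp
    obtain ⟨δ, hδ, hsh⟩ := hs (min ε b) (lt_min hε hb)
    refine ⟨δ, hδ, ?_⟩
    intro x m _ hpo
    set z : ℕ → X := fun n => if n < m then x n else f^[n - m] (x m) with hz
    have hzm : ∀ k, z (m + k) = f^[k] (x m) := by
      intro k
      simp only [hz]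
      rw [if_neg (by omega)]
      congr 1
      omega
    have hzpo : IsPseudoOrbit f δ z := by
      intro n
      by_cases h : n + 1 ≤ m
      · have h1 : z n = x n := if_pos (by omega)
        have h2 : z (n + 1) = x (n + 1) := by
          by_cases h3 : n + 1 < m
          · exact if_pos h3
          · have h4 : n + 1 = m := by omega
            simp [hz, h4]
        rw [h1, h2]
        exact hpo n (by omega)
      · have h1 : z n = f^[n - m] (x m) := if_neg (by omega)
        have h2 : z (n + 1) = f^[n + 1 - m] (x m) := if_neg (by omega)
        rw [h1, h2]
        have h3 : n + 1 - m = (n - m) + 1 := by omega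
        rw [h3, Function.iterate_succ_apply', dist_self]
        exact hδ
    obtain ⟨y, hy⟩ := hsh z (fun n => Set.mem_univ _) hzpo
    refine ⟨y, ?_, ?_⟩
    · intro i hi
      have h := hy i
      simp only [hz, if_pos hi] at h
      exact lt_of_lt_of_le h (min_le_left _ _)
    · apply hexp
      intro k
      have h := hy (m + k)
      rw [hzm k, add_comm, Function.iterate_add_apply] at h
      exact lt_of_lt_of_le h (min_le_right _ _)
  · intro hh ε hε
    obtain ⟨δ, hδ, hsh⟩ := hh (ε / 2) (by linarith)
    refine ⟨δ, hδ, ?_⟩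
    intro x _ hpo
    have hy : ∀ m, ∃ y : X, ∀ i < m, dist (f^[i] y) (x i) < ε / 2 := by
      intro m
      obtain ⟨y, hy1, -⟩ := hsh x m (fun i _ => Set.mem_univ _) (fun i _ => hpo i)
      exact ⟨y, hy1⟩
    choose y hy using hy
    obtain ⟨p, -, φ, hφ, hconv⟩ := isCompact_univ.tendsto_subseq (fun m => Set.mem_univ (y m))
    refine ⟨p, fun n => ?_⟩
    have hcont : Tendsto (fun m => dist (f^[n] (y (φ m))) (x n)) atTop
        (𝓝 (dist (f^[n] p) (x n))) :=
      (((hf.iterate n).continuousAt.tendsto.comp hconv).dist tendsto_const_nhds)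
    have hle : dist (f^[n] p) (x n) ≤ ε / 2 := by
      apply le_of_tendsto hcont
      filter_upwards [eventually_gt_atTop n] with m hm
      exact le_of_lt (hy (φ m) n (lt_of_lt_of_le hm hφ.le_apply))
    linarith
end

section
/- Let (X,d) be a compact metric space and let f : X → X be continuous, surjective and c-expansive. Then f has shadowing if and only if f has s-limit shadowing. -/
open Metric Filter Topology Set

section Defs

variable {X : Type*} [MetricSpace X]

/-- `f` is c-expansive. -/
def CExpansive (f : X → X) : Prop :=
  ∃ b > 0, ∀ xo yo : ℤ → X,
    (∀ m : ℤ, f (xo m) = xo (m + 1)) → (∀ m : ℤ, f (yo m) = yo (m + 1)) →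
    (∀ m : ℤ, dist (xo m) (yo m) < b) → xo 0 = yo 0

end Defs

section Aux

variable {X : Type*} [MetricSpace X]

/-- Every point of a surjective system lies on a full (bi-infinite) orbit. -/
lemma exists_fullOrbit (f : X → X) (hsur : Function.Surjective f) (y : X) :
    ∃ Y : ℤ → X, (∀ n : ℕ, Y (n : ℤ) = f^[n] y) ∧ ∀ m : ℤ, f (Y m) = Y (m + 1) := by
  set g := Function.surjInv hsur with hgdef
  have hg : ∀ a, f (g a) = a := fun a => Function.surjInv_eq hsur a
  refine ⟨fun m => if 0 ≤ m then f^[m.toNat] y else g^[m.natAbs] y, ?_, ?_⟩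
  · intro n; simp
  · intro m
    rcases le_or_gt 0 m with h | h
    · have h1 : 0 ≤ m + 1 := by omega
      have h2 : (m + 1).toNat = m.toNat + 1 := by omega
      simp only [if_pos h, if_pos h1, h2, Function.iterate_succ_apply']
    · rcases eq_or_lt_of_le (show m ≤ -1 by omega) with h1 | h1
      · subst h1
        norm_num
        exact hg y
      · have h2 : ¬ (0 ≤ m) := by omega
        have h3 : ¬ (0 ≤ m + 1) := by omega
        have h4 : m.natAbs = (m + 1).natAbs + 1 := by omega
        simp only [if_neg h2, if_neg h3, h4, Function.iterate_succ_apply']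
        rw [hg]

end Aux

theorem stmt11 {X : Type*} [MetricSpace X] [CompactSpace X] (f : X → X)
    (hf : Continuous f) (hsur : Function.Surjective f) (hexp : CExpansive f) :
    ShadowingOn f Set.univ ↔ SLimitShadowingOn f Set.univ := by
  constructor
  · intro hsh ε hε
    obtain ⟨b, hb, hexpb⟩ := hexp
    set ε₁ := min ε (b / 3) with hε₁def
    have hε₁ : 0 < ε₁ := lt_min hε (by linarith)
    obtain ⟨δ, hδ, hδsh⟩ := hsh ε₁ hε₁
    refine ⟨δ, hδ, ?_, ?_⟩
    · intro x hx hpo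
      obtain ⟨y, hy⟩ := hδsh x hx hpo
      exact ⟨y, fun n => lt_of_lt_of_le (hy n) (min_le_left _ _)⟩
    · intro x hx hpo hasym
      obtain ⟨y, hy⟩ := hδsh x hx hpo
      refine ⟨y, fun n => lt_of_lt_of_le (hy n) (min_le_left _ _), ?_⟩
      by_contra hnt
      -- extract a frequent deviation ε'
      obtain ⟨ε', hε', hfreq⟩ : ∃ ε' > (0:ℝ), ∀ N : ℕ, ∃ n ≥ N,
          ε' ≤ dist (f^[n] y) (x n) := by
        simp only [AsympShadows, Metric.tendsto_atTop] at hnt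
        push_neg at hnt
        obtain ⟨ε', hε'0, h⟩ := hnt
        refine ⟨ε', hε'0, fun N => ?_⟩
        obtain ⟨n, hn, hd⟩ := h N
        refine ⟨n, hn, ?_⟩
        rwa [Real.dist_eq, sub_zero, abs_of_nonneg dist_nonneg] at hd
      -- for each k, pick a far-out time n k where the deviation is ≥ ε',
      -- and a point z k shadowing the tail of x from n k - k with accuracy εk k
      set εk : ℕ → ℝ := fun k => min (b / 3) (1 / (k + 1)) with hεkdef
      have hεkpos : ∀ k : ℕ, 0 < εk k := fun k => lt_min (by linarith) (by positivity)
      have hεkle : ∀ k : ℕ, εk k ≤ b / 3 := fun k => min_le_left _ _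
      have hεkle' : ∀ k : ℕ, εk k ≤ 1 / (k + 1) := fun k => min_le_right _ _
      have hstep : ∀ k : ℕ, ∃ z : X, ∃ n : ℕ, k ≤ n ∧ ε' ≤ dist (f^[n] y) (x n) ∧
          ∀ j : ℕ, dist (f^[j] z) (x (n - k + j)) < εk k := by
        intro k
        obtain ⟨δ', hδ', hsh'⟩ := hsh _ (hεkpos k)
        obtain ⟨M, hM⟩ := Metric.tendsto_atTop.mp hasym δ' hδ'
        obtain ⟨n, hn, hdn⟩ := hfreq (M + k)
        have hpo' : IsPseudoOrbit f δ' (fun j => x (n - k + j)) := by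
          intro j
          have h := hM (n - k + j) (by omega)
          rw [Real.dist_eq, sub_zero, abs_of_nonneg dist_nonneg] at h
          exact h
        obtain ⟨z, hz⟩ := hsh' _ (fun _ => Set.mem_univ _) hpo'
        exact ⟨z, n, by omega, hdn, hz⟩
      choose z nn hnk hdev hz using hstep
      -- full orbits through y and the z k
      obtain ⟨Y, hY0, hYorb⟩ := exists_fullOrbit f hsur y
      choose Z hZ0 hZorb using fun k => exists_fullOrbit f hsur (z k)
      -- the sequence of orbit pairs
      set F : ℕ → (ℤ → X × X) :=
        fun k m => (Y ((nn k : ℤ) + m), Z k (m + (k : ℤ))) with hFdef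
      obtain ⟨G, -, φ, hφ, hG⟩ :=
        isCompact_univ.tendsto_subseq (x := F) (fun k => Set.mem_univ _)
      have hφge : ∀ j, j ≤ φ j := fun j => hφ.le_apply
      have hGm : ∀ m : ℤ, Filter.Tendsto (fun j => F (φ j) m) Filter.atTop (nhds (G m)) :=
        fun m => ((continuous_apply m).tendsto G).comp hG
      set A : ℤ → X := fun m => (G m).1 with hAdef
      set C : ℤ → X := fun m => (G m).2 with hCdef
      have hA : ∀ m : ℤ, Filter.Tendsto (fun j => Y ((nn (φ j) : ℤ) + m))
          Filter.atTop (nhds (A m)) :=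
        fun m => (continuous_fst.tendsto (G m)).comp (hGm m)
      have hC : ∀ m : ℤ, Filter.Tendsto (fun j => Z (φ j) (m + (φ j : ℤ)))
          Filter.atTop (nhds (C m)) :=
        fun m => (continuous_snd.tendsto (G m)).comp (hGm m)
      -- limits are full orbits
      have hAorb : ∀ m : ℤ, f (A m) = A (m + 1) := by
        intro m
        have h1 : Filter.Tendsto (fun j => f (Y ((nn (φ j) : ℤ) + m)))
            Filter.atTop (nhds (f (A m))) := (hf.tendsto _).comp (hA m)
        have heq : (fun j => f (Y ((nn (φ j) : ℤ) + m)))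
            = fun j => Y ((nn (φ j) : ℤ) + (m + 1)) := by
          funext j; rw [hYorb, add_assoc]
        rw [heq] at h1
        exact tendsto_nhds_unique h1 (hA (m + 1))
      have hCorb : ∀ m : ℤ, f (C m) = C (m + 1) := by
        intro m
        have h1 : Filter.Tendsto (fun j => f (Z (φ j) (m + (φ j : ℤ))))
            Filter.atTop (nhds (f (C m))) := (hf.tendsto _).comp (hC m)
        have heq : (fun j => f (Z (φ j) (m + (φ j : ℤ))))
            = fun j => Z (φ j) ((m + 1) + (φ j : ℤ)) := by
          funext j; rw [hZorb]; ring_nf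
        rw [heq] at h1
        exact tendsto_nhds_unique h1 (hC (m + 1))
      -- the key distance estimates, for k ≥ |m|
      have key : ∀ (m : ℤ) (k : ℕ), m.natAbs ≤ k →
          dist (Y ((nn k : ℤ) + m)) (x (((nn k : ℤ) + m).toNat)) < ε₁ ∧
          dist (Z k (m + (k : ℤ))) (x (((nn k : ℤ) + m).toNat)) < εk k := by
        intro m k hk
        have hnnk := hnk k
        set N : ℕ := ((nn k : ℤ) + m).toNat with hNdef
        have hNcast : (N : ℤ) = (nn k : ℤ) + m := by omega
        set L : ℕ := (m + (k : ℤ)).toNat with hLdef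
        have hLcast : (L : ℤ) = m + (k : ℤ) := by omega
        constructor
        · have h1 : Y ((nn k : ℤ) + m) = f^[N] y := by rw [← hNcast, hY0]
          rw [h1]; exact hy N
        · have h1 : Z k (m + (k : ℤ)) = f^[L] (z k) := by rw [← hLcast, hZ0]
          have h2 : nn k - k + L = N := by omega
          rw [h1, ← h2]
          exact hz k L
      -- distances along the orbits are bounded by 2b/3 < b
      have hbound : ∀ m : ℤ, dist (A m) (C m) < b := by
        intro m
        have htend := (hA m).dist (hC m)
        have hle : dist (A m) (C m) ≤ 2 * b / 3 := by
          refine le_of_tendsto htend ?_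
          filter_upwards [Filter.eventually_ge_atTop m.natAbs] with j hj
          have hk : m.natAbs ≤ φ j := le_trans hj (hφge j)
          obtain ⟨hY', hZ'⟩ := key m (φ j) hk
          have := dist_triangle (Y ((nn (φ j) : ℤ) + m))
            (x (((nn (φ j) : ℤ) + m).toNat)) (Z (φ j) (m + (φ j : ℤ)))
          have hε₁b : ε₁ ≤ b / 3 := min_le_right _ _
          have hεkb := hεkle (φ j)
          rw [dist_comm (x (((nn (φ j) : ℤ) + m).toNat))] at this
          linarith
        linarith
      -- but the distance at 0 is at least ε'
      have hlow : ε' ≤ dist (A 0) (C 0) := by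
        have htend := (hA 0).dist (hC 0)
        have htz : Filter.Tendsto (fun j => ε' - εk (φ j)) Filter.atTop (nhds ε') := by
          have h0 : Filter.Tendsto (fun j => εk (φ j)) Filter.atTop (nhds 0) := by
            apply squeeze_zero (fun j => (hεkpos (φ j)).le) (fun j => hεkle' (φ j))
            have h1 : Filter.Tendsto (fun n : ℕ => 1 / ((n : ℝ) + 1))
                Filter.atTop (nhds 0) := tendsto_one_div_add_atTop_nhds_zero_nat
            exact h1.comp hφ.tendsto_atTop
          simpa using (tendsto_const_nhds (x := ε')).sub h0
        refine le_of_tendsto_of_tendsto' htz htend ?_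
        intro j
        obtain ⟨hY', hZ'⟩ := key 0 (φ j) (by simp)
        rw [dist_comm] at hZ'
        have hdevj := hdev (φ j)
        have hNeq : (((nn (φ j) : ℤ) + 0).toNat) = nn (φ j) := by omega
        rw [hNeq] at hY' hZ'
        have h1 : Y ((nn (φ j) : ℤ) + 0) = f^[nn (φ j)] y := by
          rw [show (nn (φ j) : ℤ) + 0 = ((nn (φ j) : ℕ) : ℤ) by ring, hY0]
        rw [h1] at hY'
        have := dist_triangle (f^[nn (φ j)] y) (x (nn (φ j))) (Z (φ j) (0 + (φ j : ℤ)))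
        have h3 := dist_triangle (Y ((nn (φ j) : ℤ) + 0)) (f^[nn (φ j)] y)
          (Z (φ j) (0 + (φ j : ℤ)))
        rw [h1, dist_self, zero_add] at h3
        have h4 : dist (f^[nn (φ j)] y) (x (nn (φ j)))
            ≤ dist (f^[nn (φ j)] y) (Z (φ j) (0 + (φ j : ℤ)))
              + dist (Z (φ j) (0 + (φ j : ℤ))) (x (nn (φ j))) := dist_triangle _ _ _
        rw [dist_comm (Z (φ j) (0 + (φ j : ℤ)))] at h4
        have h5 : dist (Y ((nn (φ j) : ℤ) + 0)) (Z (φ j) (0 + (φ j : ℤ)))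
            = dist (f^[nn (φ j)] y) (Z (φ j) (0 + (φ j : ℤ))) := by rw [h1]
        rw [h5]
        linarith
      have h0 := hexpb A C hAorb hCorb hbound
      rw [h0, dist_self] at hlow
      linarith
  · intro hs ε hε
    obtain ⟨δ, hδ, h1, -⟩ := hs ε hε
    exact ⟨δ, hδ, h1⟩
end

section
/- Let (X,d) be a compact metric space and let f : X → X be continuous and positively expansive. Then the following are equivalent: f has shadowing; f has h-shadowing; f has s-limit shadowing. Moreover, if these hold then f also has limit shadowing. -/
open Metric Filter Topology Set

section Aux

variable {X : Type*} [MetricSpace X] [CompactSpace X] {f : X → X}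

private lemma tendsto_zero_of_eventually {g : ℕ → ℝ}
    (h : ∀ η > (0:ℝ), ∃ N, ∀ n ≥ N, g n < η) (h0 : ∀ n, 0 ≤ g n) :
    Filter.Tendsto g Filter.atTop (nhds 0) := by
  rw [Metric.tendsto_atTop]
  intro η hη
  obtain ⟨N, hN⟩ := h η hη
  exact ⟨N, fun n hn => by
    rw [Real.dist_eq, sub_zero, abs_of_nonneg (h0 n)]; exact hN n hn⟩

private lemma eventually_of_tendsto_zero {g : ℕ → ℝ}
    (h : Filter.Tendsto g Filter.atTop (nhds 0)) {η : ℝ} (hη : 0 < η) :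
    ∃ N, ∀ n ≥ N, g n < η := by
  obtain ⟨N, hN⟩ := Metric.tendsto_atTop.mp h η hη
  refine ⟨N, fun n hn => lt_of_le_of_lt (le_abs_self _) ?_⟩
  simpa [Real.dist_eq] using hN n hn

/-- gluing lemma: a point that eventually `b/3`-shadows an asymptotic pseudo-orbit
asymptotically shadows it, given shadowing and expansivity with constant `b`. -/
private lemma glue (hS : ShadowingOn f Set.univ) {b : ℝ} (hb : 0 < b)
    (hexp : ∀ x y : X, (∀ n : ℕ, dist (f^[n] x) (f^[n] y) < b) → x = y)
    (x : ℕ → X) (hx : IsAsymptoticOrbit f x) (y : X) (M : ℕ)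
    (hy : ∀ n ≥ M, dist (f^[n] y) (x n) < b / 3) :
    AsympShadows f y x := by
  apply tendsto_zero_of_eventually _ (fun n => dist_nonneg)
  intro η hη
  have hη'0 : 0 < min η (b / 3) := lt_min hη (by linarith)
  obtain ⟨δ, hδ0, hδ⟩ := hS (min η (b / 3)) hη'0
  obtain ⟨M₁, hM₁⟩ := eventually_of_tendsto_zero hx hδ0
  refine ⟨max M M₁, fun n hn => ?_⟩
  set M' := max M M₁ with hM'
  have hpo : IsPseudoOrbit f δ (fun j => x (M' + j)) := by
    intro j
    have h1 : M' + j ≥ M₁ := le_trans (le_max_right _ _) (Nat.le_add_right _ _)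
    have h2 := hM₁ (M' + j) h1
    show dist (f (x (M' + j))) (x (M' + (j + 1))) < δ
    have h3 : M' + (j + 1) = M' + j + 1 := by omega
    rw [h3]
    exact h2
  obtain ⟨u, hu⟩ := hδ _ (fun _ => Set.mem_univ _) hpo
  have key : f^[M'] y = u := by
    apply hexp
    intro j
    have h1 : dist (f^[M' + j] y) (x (M' + j)) < b / 3 :=
      hy _ (le_trans (le_max_left _ _) (Nat.le_add_right _ _))
    have h2 : dist (f^[j] u) (x (M' + j)) < min η (b / 3) := hu j
    have h4 : f^[j] (f^[M'] y) = f^[M' + j] y := by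
      rw [← Function.iterate_add_apply, Nat.add_comm]
    have h5 : min η (b / 3) ≤ b / 3 := min_le_right _ _
    calc dist (f^[j] (f^[M'] y)) (f^[j] u)
        ≤ dist (f^[j] (f^[M'] y)) (x (M' + j)) + dist (f^[j] u) (x (M' + j)) :=
          dist_triangle_right _ _ _
      _ < b / 3 + min η (b / 3) := by rw [h4]; exact add_lt_add h1 h2
      _ ≤ b := by linarith
  obtain ⟨j, rfl⟩ := Nat.exists_eq_add_of_le hn
  have h2 := hu j
  rw [← key] at h2
  have h4 : f^[j] (f^[M'] y) = f^[M' + j] y := by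
    rw [← Function.iterate_add_apply, Nat.add_comm]
  rw [h4] at h2
  exact lt_of_lt_of_le h2 (min_le_left _ _)

private lemma shad_to_h (hS : ShadowingOn f Set.univ) {b : ℝ} (hb : 0 < b)
    (hexp : ∀ x y : X, (∀ n : ℕ, dist (f^[n] x) (f^[n] y) < b) → x = y) :
    HShadowingOn f Set.univ := by
  intro ε hε
  have hε'0 : 0 < min ε (b / 2) := lt_min hε (by linarith)
  obtain ⟨δ, hδ0, hδ⟩ := hS (min ε (b / 2)) hε'0
  refine ⟨δ, hδ0, fun x m _ hx => ?_⟩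
  set x' : ℕ → X := fun i => if i < m then x i else f^[i - m] (x m) with hx'
  have hpo : IsPseudoOrbit f δ x' := by
    intro i
    by_cases h1 : i + 1 < m
    · have h2 : i < m := by omega
      simp only [hx', if_pos h1, if_pos h2]
      exact hx i h2
    · by_cases h2 : i < m
      · have h3 : i + 1 = m := by omega
        simp only [hx', if_pos h2, if_neg h1]
        have h4 : i + 1 - m = 0 := by omega
        rw [h4, Function.iterate_zero_apply, ← h3]
        exact hx i h2
      · simp only [hx', if_neg h1, if_neg h2]
        have h5 : i + 1 - m = (i - m) + 1 := by omega
        rw [h5, Function.iterate_succ_apply']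
        simpa using hδ0
  obtain ⟨y, hy⟩ := hδ x' (fun _ => Set.mem_univ _) hpo
  refine ⟨y, fun i hi => ?_, ?_⟩
  · have h6 := hy i
    simp only [hx', if_pos hi] at h6
    exact lt_of_lt_of_le h6 (min_le_left _ _)
  · apply hexp
    intro k
    have h6 := hy (m + k)
    have h7 : ¬ (m + k < m) := by omega
    simp only [hx', if_neg h7] at h6
    have h8 : m + k - m = k := by omega
    rw [h8] at h6
    have h9 : f^[m + k] y = f^[k] (f^[m] y) := by
      rw [← Function.iterate_add_apply, Nat.add_comm]
    rw [h9] at h6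
    exact lt_of_lt_of_le h6 (le_trans (min_le_right _ _) (by linarith))

private lemma h_to_shad (hf : Continuous f) (hH : HShadowingOn f Set.univ) :
    ShadowingOn f Set.univ := by
  intro ε hε
  obtain ⟨δ, hδ0, hδ⟩ := hH (ε / 2) (by linarith)
  refine ⟨δ, hδ0, fun x _ hx => ?_⟩
  choose y hy _ using fun m => hδ x m (fun _ _ => Set.mem_univ _) (fun i _ => hx i)
  obtain ⟨z, _, φ, hφ, hz⟩ := isCompact_univ.tendsto_subseq (fun m => Set.mem_univ (y m))
  refine ⟨z, fun n => ?_⟩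
  have hle : dist (f^[n] z) (x n) ≤ ε / 2 := by
    have hcont : Filter.Tendsto (fun m => dist (f^[n] (y (φ m))) (x n))
        Filter.atTop (nhds (dist (f^[n] z) (x n))) :=
      (((hf.iterate n).tendsto z).comp hz).dist tendsto_const_nhds
    apply le_of_tendsto hcont
    filter_upwards [Filter.eventually_ge_atTop (n + 1)] with m hm
    have hnm : n < φ m := lt_of_lt_of_le (by omega : n < m) hφ.le_apply
    exact le_of_lt (hy (φ m) n hnm)
  linarith

private lemma shad_to_slimit (hS : ShadowingOn f Set.univ) {b : ℝ} (hb : 0 < b)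
    (hexp : ∀ x y : X, (∀ n : ℕ, dist (f^[n] x) (f^[n] y) < b) → x = y) :
    SLimitShadowingOn f Set.univ := by
  intro ε hε
  have hε'0 : 0 < min ε (b / 3) := lt_min hε (by linarith)
  obtain ⟨δ, hδ0, hδ⟩ := hS (min ε (b / 3)) hε'0
  refine ⟨δ, hδ0, ?_, ?_⟩
  · intro x hx hpo
    obtain ⟨y, hy⟩ := hδ x hx hpo
    exact ⟨y, fun n => lt_of_lt_of_le (hy n) (min_le_left _ _)⟩
  · intro x hx hpo hasym
    obtain ⟨y, hy⟩ := hδ x hx hpo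
    refine ⟨y, fun n => lt_of_lt_of_le (hy n) (min_le_left _ _), ?_⟩
    exact glue hS hb hexp x hasym y 0
      (fun n _ => lt_of_lt_of_le (hy n) (min_le_right _ _))

private lemma shad_to_limit (hf : Continuous f) (hS : ShadowingOn f Set.univ)
    {b : ℝ} (hb : 0 < b)
    (hexp : ∀ x y : X, (∀ n : ℕ, dist (f^[n] x) (f^[n] y) < b) → x = y) :
    LimitShadowingOn f Set.univ := by
  intro x _ hx
  -- uniform continuity of f
  have huc : ∀ γ > (0:ℝ), ∃ γ' > (0:ℝ), ∀ a c : X, dist a c < γ' → dist (f a) (f c) < γ := by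
    intro γ hγ
    have h1 := CompactSpace.uniformContinuous_of_continuous hf
    rw [Metric.uniformContinuous_iff] at h1
    obtain ⟨γ', hγ'0, h2⟩ := h1 γ hγ
    exact ⟨γ', hγ'0, fun a c h => h2 h⟩
  -- approximate deep preimages of points far along the asymptotic pseudo-orbit
  have S : ∀ m : ℕ, ∀ γ > (0:ℝ), ∃ N, ∀ n ≥ N, ∃ c : X, dist (x n) (f^[m] c) < γ := by
    intro m
    induction m with
    | zero =>
      intro γ hγ
      exact ⟨0, fun n _ => ⟨x n, by simpa using hγ⟩⟩
    | succ m ih =>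
      intro γ hγ
      obtain ⟨γ', hγ'0, hγ'⟩ := huc (γ / 2) (by linarith)
      obtain ⟨N₁, hN₁⟩ := ih γ' hγ'0
      obtain ⟨N₂, hN₂⟩ := eventually_of_tendsto_zero hx (half_pos hγ)
      refine ⟨N₁ + N₂ + 1, fun n hn => ?_⟩
      obtain ⟨k, rfl⟩ : ∃ k, n = k + 1 := ⟨n - 1, by omega⟩
      obtain ⟨c, hc⟩ := hN₁ k (by omega)
      refine ⟨c, ?_⟩
      have h1 : dist (x (k + 1)) (f (x k)) < γ / 2 := by
        rw [dist_comm]; exact hN₂ k (by omega)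
      have h2 : dist (f (x k)) (f (f^[m] c)) < γ / 2 := hγ' _ _ hc
      have h3 : f^[m + 1] c = f (f^[m] c) := Function.iterate_succ_apply' f m c
      rw [h3]
      calc dist (x (k + 1)) (f (f^[m] c))
          ≤ dist (x (k + 1)) (f (x k)) + dist (f (x k)) (f (f^[m] c)) := dist_triangle _ _ _
        _ < γ / 2 + γ / 2 := add_lt_add h1 h2
        _ = γ := by ring
  have hε₂ : (0:ℝ) < b / 3 := by linarith
  obtain ⟨δ, hδ0, hδ⟩ := hS (b / 3) hε₂
  obtain ⟨N₀, hN₀⟩ := eventually_of_tendsto_zero hx hδ0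
  -- select indices with deep approximate preimages
  have hsel : ∀ m : ℕ, ∃ n ≥ N₀, ∃ c : X, dist (x n) (f^[m] c) < δ / 2 := by
    intro m
    obtain ⟨N, hN⟩ := S m (δ / 2) (half_pos hδ0)
    obtain ⟨c, hc⟩ := hN (N + N₀) (by omega)
    exact ⟨N + N₀, by omega, c, hc⟩
  choose nn hnn cc hcc using hsel
  obtain ⟨lam, -, φ, hφ, hlim⟩ :=
    isCompact_univ.tendsto_subseq (fun m => Set.mem_univ (f^[m] (cc m)))
  -- lam has preimages of every depth
  have hlam : ∀ k : ℕ, ∃ p : X, f^[k] p = lam := by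
    intro k
    have hcl : IsClosed (f^[k] '' Set.univ) :=
      (isCompact_univ.image (hf.iterate k)).isClosed
    have hmem : lam ∈ f^[k] '' Set.univ := by
      apply hcl.mem_of_tendsto hlim
      filter_upwards [Filter.eventually_ge_atTop k] with m hm
      have hm' : k ≤ φ m := le_trans hm hφ.le_apply
      obtain ⟨j, hj⟩ := Nat.exists_eq_add_of_le hm'
      refine ⟨f^[j] (cc (φ m)), Set.mem_univ _, ?_⟩
      show f^[k] (f^[j] (cc (φ m))) = f^[φ m] (cc (φ m))
      rw [hj, Function.iterate_add_apply]
    obtain ⟨p, -, hp⟩ := hmem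
    exact ⟨p, hp⟩
  -- find a seam index M
  obtain ⟨m₀, hm₀⟩ : ∃ m, dist (f^[φ m] (cc (φ m))) lam < δ / 2 := by
    obtain ⟨N, hN⟩ := Metric.tendsto_atTop.mp hlim (δ / 2) (half_pos hδ0)
    refine ⟨N, ?_⟩
    have := hN N le_rfl
    rwa [Function.comp_apply] at this
  set M := nn (φ m₀) with hMdef
  have hMN₀ : N₀ ≤ M := hnn (φ m₀)
  obtain ⟨p, hp⟩ := hlam M
  have hseam : dist (f^[M] p) (x M) < δ := by
    rw [hp, dist_comm]
    calc dist (x M) lam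
        ≤ dist (x M) (f^[φ m₀] (cc (φ m₀))) + dist (f^[φ m₀] (cc (φ m₀))) lam :=
          dist_triangle _ _ _
      _ < δ / 2 + δ / 2 := add_lt_add (hcc (φ m₀)) hm₀
      _ = δ := by ring
  -- pseudo-orbit following p's orbit, then x from time M on
  set w : ℕ → X := fun i => if i < M then f^[i] p else x i with hw
  have hpo : IsPseudoOrbit f δ w := by
    intro i
    by_cases h1 : i + 1 < M
    · have h2 : i < M := by omega
      simp only [hw, if_pos h1, if_pos h2]
      rw [Function.iterate_succ_apply']
      simpa using hδ0
    · by_cases h2 : i < M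
      · have h3 : i + 1 = M := by omega
        simp only [hw, if_pos h2, if_neg h1]
        have : f (f^[i] p) = f^[i + 1] p := (Function.iterate_succ_apply' f i p).symm
        rw [this, h3]
        exact hseam
      · simp only [hw, if_neg h1, if_neg h2]
        exact hN₀ i (by omega)
  obtain ⟨y, hy⟩ := hδ w (fun _ => Set.mem_univ _) hpo
  refine ⟨y, glue hS hb hexp x hx y M (fun n hn => ?_)⟩
  have h6 := hy n
  simp only [hw, if_neg (by omega : ¬ n < M)] at h6
  exact h6

end Aux

theorem stmt12 {X : Type*} [MetricSpace X] [CompactSpace X] (f : X → X)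
    (hf : Continuous f) (hexp : PositivelyExpansive f) :
    (ShadowingOn f Set.univ ↔ HShadowingOn f Set.univ) ∧
    (ShadowingOn f Set.univ ↔ SLimitShadowingOn f Set.univ) ∧
    (ShadowingOn f Set.univ → LimitShadowingOn f Set.univ) := by
  obtain ⟨b, hb, hexpb⟩ := hexp
  refine ⟨⟨fun hS => shad_to_h hS hb hexpb, fun hH => h_to_shad hf hH⟩,
    ⟨fun hS => shad_to_slimit hS hb hexpb, fun hSL => ?_⟩,
    fun hS => shad_to_limit hf hS hb hexpb⟩
  intro ε hε
  obtain ⟨δ, hδ0, h1, -⟩ := hSL ε hε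
  exact ⟨δ, hδ0, h1⟩
end

section
/- Let (X,d) be a compact metric space, let f : X → X be continuous, and let M ⊆ X. If f is ball expanding on M, then f has h-shadowing on M. -/
open Metric Filter Topology Set

theorem stmt13 {X : Type*} [MetricSpace X] [CompactSpace X] (f : X → X)
    (hf : Continuous f) (M : Set X) (hball : BallExpandingOn f M) :
    HShadowingOn f M := by
  obtain ⟨μ, hμ, ν, hν, hB⟩ := hball
  intro ε hε
  set ε' : ℝ := min ε ν / 2 with hε'def
  have hε'pos : 0 < ε' := by
    have := lt_min hε hν
    positivity
  have hε'ν : ε' < ν := by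
    have h1 : min ε ν ≤ ν := min_le_right _ _
    have : ε' ≤ ν / 2 := by rw [hε'def]; linarith
    linarith
  have hε'ε : ε' < ε := by
    have h1 : min ε ν ≤ ε := min_le_left _ _
    have : ε' ≤ ε / 2 := by rw [hε'def]; linarith
    linarith
  have hδpos : 0 < (μ - 1) * ε' := by
    have : 0 < μ - 1 := by linarith
    positivity
  refine ⟨(μ - 1) * ε', hδpos, ?_⟩
  have key : ∀ m (x : ℕ → X), (∀ i ≤ m, x i ∈ M) →
      (∀ i < m, dist (f (x i)) (x (i + 1)) < (μ - 1) * ε') →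
      ∃ y, (∀ i ≤ m, dist (f^[i] y) (x i) < ε') ∧ f^[m] y = x m := by
    intro m
    induction m with
    | zero =>
      intro x _ _
      exact ⟨x 0, fun i hi => by simp [Nat.le_zero.mp hi, hε'pos], rfl⟩
    | succ m ih =>
      intro x hxM hpo
      obtain ⟨y', h1, h2⟩ := ih (fun i => x (i + 1))
        (fun i hi => hxM (i + 1) (by omega)) (fun i hi => hpo (i + 1) (by omega))
      have hy' : y' ∈ Metric.ball (f (x 0)) (μ * ε') := by
        have d1 : dist y' (x 1) < ε' := by simpa using h1 0 (Nat.zero_le _)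
        have d2 : dist (f (x 0)) (x 1) < (μ - 1) * ε' := hpo 0 (by omega)
        rw [Metric.mem_ball]
        calc dist y' (f (x 0)) ≤ dist y' (x 1) + dist (f (x 0)) (x 1) :=
              dist_triangle_right _ _ _
          _ < ε' + (μ - 1) * ε' := add_lt_add d1 d2
          _ = μ * ε' := by ring
      obtain ⟨z, hz, hfz⟩ := hB (x 0) (hxM 0 (Nat.zero_le _)) ε' hε'pos hε'ν hy'
      refine ⟨z, ?_, ?_⟩
      · intro i hi
        cases i with
        | zero => simpa using hz
        | succ i =>
          have := h1 i (by omega)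
          rw [Function.iterate_succ_apply, hfz]
          exact this
      · rw [Function.iterate_succ_apply, hfz, h2]
  intro x m hxM hpo
  obtain ⟨y, h1, h2⟩ := key m x hxM hpo
  exact ⟨y, fun i hi => (h1 i hi.le).trans hε'ε, h2⟩
end

section
/- Let (X,d) be a compact metric space and let f : X → X be continuous. If f is open (on all of X) and expanding (on all of X), then f has h-shadowing. -/
open Metric Filter Topology Set

/-- Uniform openness: an open map on a compact metric space maps `ε`-balls onto
sets containing uniform `β`-balls. -/
lemma unifOpen {X : Type*} [MetricSpace X] [CompactSpace X] (f : X → X)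
    (hf : Continuous f) (hopen : OpenOnSet f Set.univ) :
    ∀ ε > 0, ∃ β > 0, ∀ x : X, Metric.ball (f x) β ⊆ f '' Metric.ball x ε := by
  intro ε hε
  rcases isEmpty_or_nonempty X with h | h
  · exact ⟨1, one_pos, fun x => (IsEmpty.false x).elim⟩
  have hr : ∀ x : X, ∃ r > 0, Metric.ball (f x) r ⊆ f '' Metric.ball x (ε / 2) := by
    intro x
    have h1 : f x ∈ interior (f '' Metric.ball x (ε / 2)) :=
      hopen x (mem_univ x) _ (Metric.ball_mem_nhds x (by positivity))
    rw [mem_interior_iff_mem_nhds, Metric.mem_nhds_iff] at h1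
    exact h1
  choose r hr0 hrsub using hr
  set V : X → Set X := fun x => Metric.ball x (ε / 2) ∩ f ⁻¹' (Metric.ball (f x) (r x / 2))
    with hV
  have hVopen : ∀ x, IsOpen (V x) := fun x =>
    Metric.isOpen_ball.inter (Metric.isOpen_ball.preimage hf)
  have hVmem : ∀ x, x ∈ V x := fun x =>
    ⟨Metric.mem_ball_self (by positivity), by
      simp only [mem_preimage]
      exact Metric.mem_ball_self (by have := hr0 x; positivity)⟩
  have hcover : (univ : Set X) ⊆ ⋃ x, V x := fun y _ => mem_iUnion.2 ⟨y, hVmem y⟩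
  obtain ⟨s, hs⟩ := isCompact_univ.elim_finite_subcover V hVopen hcover
  have hsne : s.Nonempty := by
    obtain ⟨y⟩ := h
    rcases mem_iUnion₂.1 (hs (mem_univ y)) with ⟨x, hx, _⟩
    exact ⟨x, hx⟩
  refine ⟨s.inf' hsne (fun x => r x / 2), ?_, ?_⟩
  · rw [gt_iff_lt, Finset.lt_inf'_iff]
    intro b _
    have := hr0 b
    positivity
  · intro y z hz
    rcases mem_iUnion₂.1 (hs (mem_univ y)) with ⟨x, hxs, hyx⟩
    obtain ⟨hyx1, hyx2⟩ := hyx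
    rw [Metric.mem_ball] at hz hyx1
    rw [mem_preimage, Metric.mem_ball] at hyx2
    have hzle : dist z (f x) < r x := by
      have h1 : s.inf' hsne (fun x => r x / 2) ≤ r x / 2 :=
        Finset.inf'_le _ hxs
      calc dist z (f x) ≤ dist z (f y) + dist (f y) (f x) := dist_triangle _ _ _
        _ < r x / 2 + r x / 2 := by
            exact add_lt_add (lt_of_lt_of_le hz h1) hyx2
        _ = r x := by ring
    obtain ⟨w, hw, hfw⟩ := hrsub x (Metric.mem_ball.2 hzle)
    refine ⟨w, ?_, hfw⟩
    rw [Metric.mem_ball] at hw ⊢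
    calc dist w y ≤ dist w x + dist x y := dist_triangle _ _ _
      _ < ε / 2 + ε / 2 := add_lt_add hw (by rw [dist_comm]; exact hyx1)
      _ = ε := by ring

theorem stmt14 {X : Type*} [MetricSpace X] [CompactSpace X] (f : X → X)
    (hf : Continuous f) (hopen : OpenOnSet f Set.univ)
    (hexp : ExpandingOn f Set.univ) :
    HShadowingOn f Set.univ := by
  obtain ⟨δ0, hδ0, μ, hμ, hexp'⟩ := hexp
  intro ε hε
  set ε' := min ε δ0 / 2 with hε'def
  have hε' : 0 < ε' := by
    have := lt_min hε hδ0
    positivity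
  obtain ⟨β, hβ, hball⟩ := unifOpen f hf hopen ε' hε'
  set ε'' := min ε' β / 2 with hε''def
  have hε'' : 0 < ε'' := by
    have := lt_min hε' hβ
    positivity
  set δ := min (μ - 1) 1 * ε'' / 2 with hδdef
  have hmin : 0 < min (μ - 1) 1 := lt_min (by linarith) one_pos
  have hδ : 0 < δ := by positivity
  refine ⟨δ, hδ, ?_⟩
  have hδε'' : δ + ε'' < μ * ε'' := by
    have h1 : min (μ - 1) 1 ≤ μ - 1 := min_le_left _ _
    rw [hδdef]
    nlinarith
  have hδβ : δ + ε'' < β := by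
    have h1 : min (μ - 1) 1 ≤ 1 := min_le_right _ _
    have h2 : ε'' ≤ β / 2 := by
      rw [hε''def]
      have := min_le_right ε' β
      linarith
    rw [hδdef]
    nlinarith
  have hε''ε' : ε'' < ε' := by
    rw [hε''def]
    have := min_le_left ε' β
    linarith
  have hε'δ0 : ε' < δ0 := by
    rw [hε'def]
    have := min_le_right ε δ0
    linarith
  have key : ∀ m : ℕ, ∀ x : ℕ → X, (∀ i < m, dist (f (x i)) (x (i + 1)) < δ) →
      ∃ y, (∀ i ≤ m, dist (f^[i] y) (x i) < ε'') ∧ f^[m] y = x m := by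
    intro m
    induction m with
    | zero =>
      intro x _
      refine ⟨x 0, fun i hi => ?_, rfl⟩
      interval_cases i
      simpa using hε''
    | succ m ih =>
      intro x hx
      obtain ⟨y', hy'1, hy'2⟩ := ih (fun i => x (i + 1)) (fun i hi => hx (i + 1) (by omega))
      have h1 : dist y' (f (x 0)) < β := by
        have h0 := hy'1 0 (Nat.zero_le m)
        simp only [Function.iterate_zero, id_eq] at h0
        have h2 := hx 0 (by omega)
        calc dist y' (f (x 0)) ≤ dist y' (x 1) + dist (x 1) (f (x 0)) := dist_triangle _ _ _
          _ < ε'' + δ := add_lt_add h0 (by rw [dist_comm]; exact h2)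
          _ < β := by linarith
      obtain ⟨y, hy, hfy⟩ := hball (x 0) (Metric.mem_ball.2 h1)
      rw [Metric.mem_ball] at hy
      have hyx : dist y (x 0) < ε'' := by
        have h2 : μ * dist y (x 0) ≤ dist (f y) (f (x 0)) :=
          hexp' y (mem_univ y) (x 0) (mem_univ (x 0)) (by linarith)
        rw [hfy] at h2
        have h0 := hy'1 0 (Nat.zero_le m)
        simp only [Function.iterate_zero, id_eq] at h0
        have h3 := hx 0 (by omega)
        have h4 : dist y' (f (x 0)) ≤ dist y' (x 1) + dist (f (x 0)) (x 1) := by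
          rw [dist_comm (f (x 0))]
          exact dist_triangle _ _ _
        nlinarith [dist_nonneg (x := y) (y := x 0)]
      refine ⟨y, ?_, ?_⟩
      · intro i hi
        cases i with
        | zero => simpa using hyx
        | succ j =>
          have hj : f^[j + 1] y = f^[j] y' := by
            rw [Function.iterate_succ_apply, hfy]
          rw [hj]
          exact hy'1 j (by omega)
      · rw [Function.iterate_succ_apply, hfy]
        exact hy'2
  intro x m _ hpo
  obtain ⟨y, h1, h2⟩ := key m x hpo
  refine ⟨y, fun i hi => ?_, h2⟩
  have hε'ε : ε' ≤ ε := by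
    rw [hε'def]
    have := min_le_left ε δ0
    linarith
  exact lt_of_lt_of_le (h1 i hi.le) (by linarith)
end

section
/- Let f : [0,1] → [0,1] be continuous and let C be a closed, nowhere dense subset of [0,1] containing all critical points of f (points at which f fails to be locally one-to-one). Suppose f is continuously differentiable on (0,1) \ C with |f'(x)| > 1 for all x ∈ (0,1) \ C. If Λ is a closed subset of [0,1] disjoint from C ∪ {0,1}, then f has shadowing, s-limit shadowing and h-shadowing on Λ. -/
open Metric Filter Topology Set

/-- `f` has shadowing on `Y`, with shadowing points taken in `[0,1]`. -/
def ShadowingOnI (f : ℝ → ℝ) (Y : Set ℝ) : Prop :=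
  ∀ ε > 0, ∃ δ > 0, ∀ x : ℕ → ℝ, (∀ n, x n ∈ Y) →
    (∀ n : ℕ, |f (x n) - x (n + 1)| < δ) →
    ∃ y ∈ Set.Icc (0 : ℝ) 1, ∀ n : ℕ, |f^[n] y - x n| < ε

/-- `f` has h-shadowing on `Y`, with shadowing points taken in `[0,1]`. -/
def HShadowingOnI (f : ℝ → ℝ) (Y : Set ℝ) : Prop :=
  ∀ ε > 0, ∃ δ > 0, ∀ (x : ℕ → ℝ) (m : ℕ), (∀ i ≤ m, x i ∈ Y) →
    (∀ i < m, |f (x i) - x (i + 1)| < δ) →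
    ∃ y ∈ Set.Icc (0 : ℝ) 1, (∀ i < m, |f^[i] y - x i| < ε) ∧ f^[m] y = x m

/-- `f` has s-limit shadowing on `Y`, with shadowing points taken in `[0,1]`. -/
def SLimitShadowingOnI (f : ℝ → ℝ) (Y : Set ℝ) : Prop :=
  ∀ ε > 0, ∃ δ > 0,
    (∀ x : ℕ → ℝ, (∀ n, x n ∈ Y) → (∀ n : ℕ, |f (x n) - x (n + 1)| < δ) →
      ∃ y ∈ Set.Icc (0 : ℝ) 1, ∀ n : ℕ, |f^[n] y - x n| < ε) ∧
    (∀ x : ℕ → ℝ, (∀ n, x n ∈ Y) → (∀ n : ℕ, |f (x n) - x (n + 1)| < δ) →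
      Filter.Tendsto (fun n => |f (x n) - x (n + 1)|) Filter.atTop (nhds 0) →
      ∃ y ∈ Set.Icc (0 : ℝ) 1, (∀ n : ℕ, |f^[n] y - x n| < ε) ∧
        Filter.Tendsto (fun n => |f^[n] y - x n|) Filter.atTop (nhds 0))


/-- Finite backward-construction lemma: exact hit at the end, controlled errors. -/
lemma lemB (f : ℝ → ℝ) (Λ : Set ℝ) (lam ρ : ℝ) (hlam : 1 < lam) (hρ : 0 < ρ)
    (cov : ∀ x ∈ Λ, ∀ t, 0 ≤ t → t ≤ ρ → ∀ z, |z - f x| ≤ lam * t →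
      ∃ y, |y - x| ≤ t ∧ f y = z) :
    ∀ (m : ℕ) (x E : ℕ → ℝ), (∀ i ≤ m, x i ∈ Λ) → (∀ i j, i ≤ j → E j ≤ E i) →
    (∀ i, 0 ≤ E i) → E 0 ≤ (lam - 1) * ρ → (∀ i < m, |f (x i) - x (i + 1)| ≤ E i) →
    ∃ y, f^[m] y = x m ∧ ∀ i ≤ m, |f^[i] y - x i| ≤ E i / (lam - 1) := by
  have hl : (0:ℝ) < lam - 1 := by linarith
  intro m
  induction m with
  | zero =>
    intro x E hx hE hEnn hEρ herr
    refine ⟨x 0, rfl, fun i hi => ?_⟩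
    interval_cases i
    simp only [Function.iterate_zero, id_eq, sub_self, abs_zero]
    exact div_nonneg (hEnn 0) hl.le
  | succ m ih =>
    intro x E hx hE hEnn hEρ herr
    obtain ⟨z, hzm, hz⟩ := ih (fun i => x (i + 1)) (fun i => E (i + 1))
      (fun i hi => hx (i + 1) (by omega)) (fun i j hij => hE _ _ (by omega))
      (fun i => hEnn _) (le_trans (hE 0 1 (by omega)) hEρ)
      (fun i hi => herr (i + 1) (by omega))
    have h1 : |z - x 1| ≤ E 1 / (lam - 1) := by simpa using hz 0 (Nat.zero_le m)
    have h2 : |f (x 0) - x 1| ≤ E 0 := herr 0 (by omega)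
    have hE10 : E 1 ≤ E 0 := hE 0 1 (by omega)
    have hdist : |z - f (x 0)| ≤ lam * (E 0 / (lam - 1)) := by
      have h3 : |z - f (x 0)| ≤ |z - x 1| + |x 1 - f (x 0)| := abs_sub_le _ _ _
      rw [abs_sub_comm (x 1)] at h3
      have h5 : lam * (E 0 / (lam - 1)) = E 0 / (lam - 1) + E 0 := by
        field_simp; ring
      rw [h5]
      calc |z - f (x 0)| ≤ |z - x 1| + |f (x 0) - x 1| := h3
        _ ≤ E 1 / (lam - 1) + E 0 := add_le_add h1 h2
        _ ≤ E 0 / (lam - 1) + E 0 := by gcongr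
    obtain ⟨y, hyx, hfy⟩ := cov (x 0) (hx 0 (by omega)) (E 0 / (lam - 1))
      (div_nonneg (hEnn 0) hl.le)
      (by rw [div_le_iff₀ hl]; linarith [hEρ]) z hdist
    refine ⟨y, ?_, ?_⟩
    · rw [Function.iterate_succ_apply, hfy]; exact hzm
    · intro i hi
      cases i with
      | zero => simpa using hyx
      | succ i =>
        rw [Function.iterate_succ_apply, hfy]
        exact hz i (by omega)

lemma iterCont (f : ℝ → ℝ) (hmaps : Set.MapsTo f (Set.Icc 0 1) (Set.Icc 0 1))
    (hcont : ContinuousOn f (Set.Icc 0 1)) (i : ℕ) :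
    ContinuousOn f^[i] (Set.Icc (0:ℝ) 1) := by
  induction i with
  | zero => simpa using continuousOn_id
  | succ i ih =>
    rw [Function.iterate_succ']
    exact hcont.comp ih (hmaps.iterate i)

/-- Infinite-orbit shadowing lemma with variable error bounds. -/
lemma lemC (f : ℝ → ℝ) (Λ : Set ℝ) (lam ρ : ℝ) (hlam : 1 < lam) (hρ : 0 < ρ)
    (hmaps : Set.MapsTo f (Set.Icc 0 1) (Set.Icc 0 1))
    (hcont : ContinuousOn f (Set.Icc 0 1))
    (hnb : ∀ a ∈ Λ, ∀ p : ℝ, |p - a| ≤ ρ → p ∈ Set.Icc (0:ℝ) 1)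
    (cov : ∀ x ∈ Λ, ∀ t, 0 ≤ t → t ≤ ρ → ∀ z, |z - f x| ≤ lam * t →
      ∃ y, |y - x| ≤ t ∧ f y = z)
    (x E : ℕ → ℝ) (hx : ∀ n, x n ∈ Λ) (hE : ∀ i j, i ≤ j → E j ≤ E i)
    (hEnn : ∀ i, 0 ≤ E i) (hEρ : E 0 ≤ (lam - 1) * ρ)
    (herr : ∀ n, |f (x n) - x (n + 1)| ≤ E n) :
    ∃ y ∈ Set.Icc (0:ℝ) 1, ∀ n, |f^[n] y - x n| ≤ E n / (lam - 1) := by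
  have hl : (0:ℝ) < lam - 1 := by linarith
  set A : ℕ → Set ℝ := fun i =>
    Set.Icc (0:ℝ) 1 ∩ f^[i] ⁻¹' Metric.closedBall (x i) (E i / (lam - 1)) with hA
  set K : ℕ → Set ℝ := fun m => ⋂ i, ⋂ (_ : i ≤ m), A i with hK
  have hAclosed : ∀ i, IsClosed (A i) :=
    fun i => (iterCont f hmaps hcont i).preimage_isClosed_of_isClosed
      isClosed_Icc Metric.isClosed_closedBall
  have hKclosed : ∀ m, IsClosed (K m) :=
    fun m => isClosed_iInter fun i => isClosed_iInter fun _ => hAclosed i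
  have hKsub : ∀ m, K m ⊆ Set.Icc (0:ℝ) 1 := by
    intro m y hy
    have : y ∈ A 0 := by
      have := Set.mem_iInter.mp hy 0
      exact Set.mem_iInter.mp this (Nat.zero_le m)
    exact this.1
  have hKne : ∀ m, (K m).Nonempty := by
    intro m
    obtain ⟨y, hym, hyb⟩ := lemB f Λ lam ρ hlam hρ cov m x E
      (fun i _ => hx i) hE hEnn hEρ (fun i _ => herr i)
    have hy0 : |y - x 0| ≤ ρ := by
      have := hyb 0 (Nat.zero_le m)
      simp only [Function.iterate_zero, id_eq] at this
      refine this.trans ?_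
      rw [div_le_iff₀ hl]; linarith [hEρ]
    have hyI : y ∈ Set.Icc (0:ℝ) 1 := hnb (x 0) (hx 0) y hy0
    refine ⟨y, Set.mem_iInter.mpr fun i => Set.mem_iInter.mpr fun hi => ?_⟩
    refine ⟨hyI, ?_⟩
    simp only [Set.mem_preimage, Metric.mem_closedBall, Real.dist_eq]
    exact hyb i hi
  have hKmono : ∀ m, K (m + 1) ⊆ K m := by
    intro m y hy
    exact Set.mem_iInter.mpr fun i => Set.mem_iInter.mpr fun hi =>
      Set.mem_iInter.mp (Set.mem_iInter.mp hy i) (by omega)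
  have hKcpt : IsCompact (K 0) :=
    isCompact_Icc.of_isClosed_subset (hKclosed 0) (hKsub 0)
  obtain ⟨y, hy⟩ := IsCompact.nonempty_iInter_of_sequence_nonempty_isCompact_isClosed
    K hKmono hKne hKcpt hKclosed
  refine ⟨y, hKsub 0 (Set.mem_iInter.mp hy 0), fun n => ?_⟩
  have : y ∈ A n := by
    have := Set.mem_iInter.mp hy n
    exact Set.mem_iInter.mp (Set.mem_iInter.mp this n) le_rfl
  have := this.2
  simpa [Real.dist_eq] using this

/-- Local covering lemma around a point where `|f'| ≥ lam > 1` on `[x-ρ, x+ρ]`. -/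
lemma covLemma (f f' : ℝ → ℝ) (x lam ρ : ℝ) (hlam : 1 < lam) (hρ : 0 < ρ)
    (hcont' : ContinuousOn f (Set.Icc (x - ρ) (x + ρ)))
    (hd : ∀ p ∈ Set.Ioo (x - ρ) (x + ρ), HasDerivAt f (f' p) p)
    (hdc : ContinuousOn f' (Set.Icc (x - ρ) (x + ρ)))
    (hlow : ∀ p ∈ Set.Icc (x - ρ) (x + ρ), lam ≤ |f' p|) :
    ∀ t, 0 ≤ t → t ≤ ρ → ∀ z, |z - f x| ≤ lam * t → ∃ y, |y - x| ≤ t ∧ f y = z := by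
  intro t ht0 htρ z hz
  rcases eq_or_lt_of_le ht0 with h0 | htpos
  · refine ⟨x, by simpa using ht0, ?_⟩
    have : |z - f x| ≤ 0 := by rw [← h0] at hz; simpa using hz
    have := abs_nonpos_iff.mp this
    linarith [sub_eq_zero.mp this]
  · have hne0 : ∀ p ∈ Set.Icc (x - ρ) (x + ρ), f' p ≠ 0 := by
      intro p hp h0
      have := hlow p hp
      rw [h0] at this; simp at this; linarith
    have hsign : (∀ p ∈ Set.Icc (x - ρ) (x + ρ), 0 < f' p) ∨
        (∀ p ∈ Set.Icc (x - ρ) (x + ρ), f' p < 0) := by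
      by_contra h
      push_neg at h
      obtain ⟨⟨p, hp, hp2⟩, ⟨q, hq, hq2⟩⟩ := h
      have hpneg : f' p < 0 := lt_of_le_of_ne hp2 (hne0 p hp)
      have hqpos : 0 < f' q := lt_of_le_of_ne hq2 (Ne.symm (hne0 q hq))
      have hsub : Set.uIcc p q ⊆ Set.Icc (x - ρ) (x + ρ) := Set.uIcc_subset_Icc hp hq
      obtain ⟨c, hc, hc0⟩ := intermediate_value_uIcc (hdc.mono hsub)
        (Set.mem_uIcc.mpr (Or.inl ⟨hpneg.le, hqpos.le⟩))
      exact hne0 c (hsub hc) hc0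
    have mvt : ∀ a b, x - ρ ≤ a → b ≤ x + ρ → a < b →
        ∃ c ∈ Set.Ioo a b, f b - f a = f' c * (b - a) := by
      intro a b ha hb hab
      have hsub : Set.Icc a b ⊆ Set.Icc (x - ρ) (x + ρ) :=
        Set.Icc_subset_Icc ha hb
      obtain ⟨c, hc, hceq⟩ := exists_hasDerivAt_eq_slope f f' hab (hcont'.mono hsub)
        (fun p hp => hd p (Set.Ioo_subset_Ioo ha hb hp))
      refine ⟨c, hc, ?_⟩
      rw [hceq, div_mul_cancel₀ _ (sub_ne_zero.mpr hab.ne')]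
    obtain ⟨c1, hc1, e1⟩ := mvt x (x + t) (by linarith) (by linarith) (by linarith)
    obtain ⟨c2, hc2, e2⟩ := mvt (x - t) x (by linarith) (by linarith) (by linarith)
    have hc1I : c1 ∈ Set.Icc (x - ρ) (x + ρ) :=
      ⟨by linarith [hc1.1], by linarith [hc1.2]⟩
    have hc2I : c2 ∈ Set.Icc (x - ρ) (x + ρ) :=
      ⟨by linarith [hc2.1], by linarith [hc2.2]⟩
    have hsubt : Set.Icc (x - t) (x + t) ⊆ Set.Icc (x - ρ) (x + ρ) :=
      Set.Icc_subset_Icc (by linarith) (by linarith)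
    have habs := abs_le.mp hz
    rcases hsign with hpos | hneg
    · have l1 : lam ≤ f' c1 := (hlow c1 hc1I).trans_eq (abs_of_pos (hpos c1 hc1I))
      have l2 : lam ≤ f' c2 := (hlow c2 hc2I).trans_eq (abs_of_pos (hpos c2 hc2I))
      have b1 : f x + lam * t ≤ f (x + t) := by nlinarith [e1]
      have b2 : f (x - t) ≤ f x - lam * t := by nlinarith [e2]
      obtain ⟨y, hy, hfy⟩ := intermediate_value_Icc (show x - t ≤ x + t by linarith)
        (hcont'.mono hsubt) (⟨by linarith, by linarith⟩ :
          z ∈ Set.Icc (f (x - t)) (f (x + t)))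
      exact ⟨y, abs_le.mpr ⟨by linarith [hy.1], by linarith [hy.2]⟩, hfy⟩
    · have l1 : f' c1 ≤ -lam := by
        have := (hlow c1 hc1I).trans_eq (abs_of_neg (hneg c1 hc1I)); linarith
      have l2 : f' c2 ≤ -lam := by
        have := (hlow c2 hc2I).trans_eq (abs_of_neg (hneg c2 hc2I)); linarith
      have b1 : f (x + t) ≤ f x - lam * t := by nlinarith [e1]
      have b2 : f x + lam * t ≤ f (x - t) := by nlinarith [e2]
      obtain ⟨y, hy, hfy⟩ := intermediate_value_Icc' (show x - t ≤ x + t by linarith)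
        (hcont'.mono hsubt) (⟨by linarith, by linarith⟩ :
          z ∈ Set.Icc (f (x + t)) (f (x - t)))
      exact ⟨y, abs_le.mpr ⟨by linarith [hy.1], by linarith [hy.2]⟩, hfy⟩
theorem stmt15 (f : ℝ → ℝ) (C Λ : Set ℝ)
    (hmaps : Set.MapsTo f (Set.Icc 0 1) (Set.Icc 0 1))
    (hcont : ContinuousOn f (Set.Icc 0 1))
    (hCsub : C ⊆ Set.Icc 0 1) (hCclosed : IsClosed C)
    (hCnwd : interior C = ∅)
    (hcrit : ∀ x ∈ Set.Icc (0 : ℝ) 1, x ∉ C →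
      ∃ V : Set ℝ, IsOpen V ∧ x ∈ V ∧ Set.InjOn f (V ∩ Set.Icc 0 1))
    (f' : ℝ → ℝ)
    (hderiv : ∀ x ∈ Set.Ioo (0 : ℝ) 1 \ C, HasDerivAt f (f' x) x)
    (hderivcont : ContinuousOn f' (Set.Ioo (0 : ℝ) 1 \ C))
    (hgrad : ∀ x ∈ Set.Ioo (0 : ℝ) 1 \ C, 1 < |f' x|)
    (hΛclosed : IsClosed Λ) (hΛsub : Λ ⊆ Set.Icc 0 1)
    (hΛdisj : Disjoint Λ (C ∪ {0, 1})) :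
    ShadowingOnI f Λ ∧ SLimitShadowingOnI f Λ ∧ HShadowingOnI f Λ := by
  rcases Λ.eq_empty_or_nonempty with hΛe | hΛne
  · subst hΛe
    exact ⟨fun ε hε => ⟨1, one_pos, fun x hx _ => absurd (hx 0) (by simp)⟩,
      fun ε hε => ⟨1, one_pos, fun x hx _ => absurd (hx 0) (by simp),
        fun x hx _ _ => absurd (hx 0) (by simp)⟩,
      fun ε hε => ⟨1, one_pos, fun x m hx _ => absurd (hx 0 (Nat.zero_le m)) (by simp)⟩⟩
  -- setup: separation constant ρ
  have hSclosed : IsClosed (C ∪ {0, 1}) :=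
    hCclosed.union (((Set.finite_singleton (1:ℝ)).insert 0).isClosed)
  have hSne : (C ∪ {0, 1} : Set ℝ).Nonempty := ⟨0, Or.inr (by simp)⟩
  have hΛcpt : IsCompact Λ := isCompact_Icc.of_isClosed_subset hΛclosed hΛsub
  obtain ⟨a₀, ha₀, hmin⟩ := hΛcpt.exists_isMinOn hΛne
    ((Metric.continuous_infDist_pt (C ∪ {0, 1})).continuousOn)
  have hμpos : 0 < Metric.infDist a₀ (C ∪ {0, 1}) :=
    (hSclosed.notMem_iff_infDist_pos hSne).mp (Set.disjoint_left.mp hΛdisj ha₀)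
  set ρ : ℝ := Metric.infDist a₀ (C ∪ {0, 1}) / 2 with hρdef
  have hρ : 0 < ρ := by positivity
  have hsep : ∀ a ∈ Λ, ∀ w ∈ C ∪ {0, 1}, 2 * ρ ≤ dist a w := by
    intro a ha w hw
    have h1 : Metric.infDist a₀ (C ∪ {0, 1}) ≤ Metric.infDist a (C ∪ {0, 1}) :=
      isMinOn_iff.mp hmin a ha
    have h2 := Metric.infDist_le_dist_of_mem (x := a) hw
    rw [hρdef]; linarith
  -- the compact neighbourhood K of Λ
  set K : Set ℝ := {p : ℝ | Metric.infDist p Λ ≤ ρ} with hKdef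
  have hK1 : ∀ a ∈ Λ, ∀ p : ℝ, |p - a| ≤ ρ → p ∈ K := by
    intro a ha p h
    have := Metric.infDist_le_dist_of_mem (x := p) ha
    rw [Real.dist_eq] at this
    exact le_trans this h
  have hK2 : ∀ p ∈ K, ∃ a ∈ Λ, |p - a| ≤ ρ := by
    intro p hp
    obtain ⟨a, ha, hd⟩ := hΛcpt.exists_infDist_eq_dist hΛne p
    exact ⟨a, ha, by rw [← Real.dist_eq, ← hd]; exact hp⟩
  have hKsubIoo : K ⊆ Set.Ioo (0:ℝ) 1 \ C := by
    intro p hp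
    obtain ⟨a, ha, hpa⟩ := hK2 p hp
    obtain ⟨ha0, ha1⟩ := hΛsub ha
    have h0 : 2 * ρ ≤ dist a 0 := hsep a ha 0 (Or.inr (by simp))
    have h1 : 2 * ρ ≤ dist a 1 := hsep a ha 1 (Or.inr (by simp))
    rw [Real.dist_eq, abs_of_nonneg (by linarith)] at h0
    rw [Real.dist_eq, abs_of_nonpos (by linarith)] at h1
    have habs := abs_le.mp hpa
    refine ⟨⟨by linarith, by linarith⟩, fun hpC => ?_⟩
    have := hsep a ha p (Or.inl hpC)
    rw [Real.dist_eq, abs_sub_comm] at this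
    linarith [le_trans this hpa]
  have hKclosed : IsClosed K :=
    isClosed_Iic.preimage (Metric.continuous_infDist_pt Λ)
  have hKcpt : IsCompact K := isCompact_Icc.of_isClosed_subset hKclosed
    (fun p hp => Set.Ioo_subset_Icc_self (hKsubIoo hp).1)
  have hKne : K.Nonempty := ⟨a₀, hK1 a₀ ha₀ a₀ (by simp [hρ.le])⟩
  -- the expansion constant lam
  obtain ⟨c, hcK, hcmin⟩ := hKcpt.exists_isMinOn hKne ((hderivcont.mono hKsubIoo).abs)
  set lam : ℝ := |f' c| with hlamdef
  have hlam : 1 < lam := hgrad c (hKsubIoo hcK)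
  have hl : (0:ℝ) < lam - 1 := by linarith
  have hlow : ∀ p ∈ K, lam ≤ |f' p| := fun p hp => isMinOn_iff.mp hcmin p hp
  -- covering property
  have cov : ∀ x ∈ Λ, ∀ t, 0 ≤ t → t ≤ ρ → ∀ z, |z - f x| ≤ lam * t →
      ∃ y, |y - x| ≤ t ∧ f y = z := by
    intro x hx
    have hIK : Set.Icc (x - ρ) (x + ρ) ⊆ K := fun p hp =>
      hK1 x hx p (abs_le.mpr ⟨by linarith [hp.1], by linarith [hp.2]⟩)
    have hIsub : Set.Icc (x - ρ) (x + ρ) ⊆ Set.Ioo (0:ℝ) 1 \ C :=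
      fun p hp => hKsubIoo (hIK hp)
    exact covLemma f f' x lam ρ hlam hρ
      (hcont.mono fun p hp => Set.Ioo_subset_Icc_self (hIsub hp).1)
      (fun p hp => hderiv p (hIsub (Set.Ioo_subset_Icc_self hp)))
      (hderivcont.mono hIsub)
      (fun p hp => hlow p (hIK hp))
  have hnb : ∀ a ∈ Λ, ∀ p : ℝ, |p - a| ≤ ρ → p ∈ Set.Icc (0:ℝ) 1 :=
    fun a ha p h => Set.Ioo_subset_Icc_self (hKsubIoo (hK1 a ha p h)).1
  -- the choice of δ given ε
  have hδ : ∀ ε : ℝ, 0 < ε → ∃ δ : ℝ, 0 < δ ∧ δ ≤ (lam - 1) * ρ ∧ δ / (lam - 1) < ε := by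
    intro ε hε
    refine ⟨min ((lam - 1) * ρ) ((lam - 1) * ε / 2), ?_, min_le_left _ _, ?_⟩
    · apply lt_min (by positivity) (by positivity)
    · rw [div_lt_iff₀ hl]
      have := min_le_right ((lam - 1) * ρ) ((lam - 1) * ε / 2)
      nlinarith
  constructor
  · -- Shadowing
    intro ε hε
    obtain ⟨δ, hδpos, hδρ, hδε⟩ := hδ ε hε
    refine ⟨δ, hδpos, fun x hx herr => ?_⟩
    obtain ⟨y, hyI, hyb⟩ := lemC f Λ lam ρ hlam hρ hmaps hcont hnb cov x (fun _ => δ)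
      hx (fun i j _ => le_rfl) (fun _ => hδpos.le) hδρ (fun n => (herr n).le)
    exact ⟨y, hyI, fun n => lt_of_le_of_lt (hyb n) hδε⟩
  constructor
  · -- SLimitShadowing
    intro ε hε
    obtain ⟨δ, hδpos, hδρ, hδε⟩ := hδ ε hε
    refine ⟨δ, hδpos, ?_, ?_⟩
    · intro x hx herr
      obtain ⟨y, hyI, hyb⟩ := lemC f Λ lam ρ hlam hρ hmaps hcont hnb cov x (fun _ => δ)
        hx (fun i j _ => le_rfl) (fun _ => hδpos.le) hδρ (fun n => (herr n).le)
      exact ⟨y, hyI, fun n => lt_of_le_of_lt (hyb n) hδε⟩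
    · intro x hx herr htend
      set g : ℕ → ℝ := fun n => |f (x n) - x (n + 1)| with hgdef
      set E : ℕ → ℝ := fun n => ⨆ k, g (n + k) with hEdef
      have hbdd : ∀ n, BddAbove (Set.range fun k => g (n + k)) :=
        fun n => ⟨δ, by rintro v ⟨k, rfl⟩; exact (herr _).le⟩
      have hub : ∀ n k, g (n + k) ≤ E n := fun n k => le_ciSup (hbdd n) k
      have hgE : ∀ n, g n ≤ E n := fun n => by simpa using hub n 0
      have hEδ : ∀ n, E n ≤ δ := fun n => ciSup_le fun k => (herr _).le
      have hEnn : ∀ n, 0 ≤ E n := fun n => le_trans (abs_nonneg _) (hgE n)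
      have hEanti : ∀ i j, i ≤ j → E j ≤ E i := by
        intro i j hij
        refine ciSup_le fun k => ?_
        have := hub i (j - i + k)
        rwa [show i + (j - i + k) = j + k by omega] at this
      obtain ⟨y, hyI, hyb⟩ := lemC f Λ lam ρ hlam hρ hmaps hcont hnb cov x E
        hx hEanti hEnn (le_trans (hEδ 0) hδρ) hgE
      refine ⟨y, hyI, fun n => ?_, ?_⟩
      · refine lt_of_le_of_lt (hyb n) (lt_of_le_of_lt ?_ hδε)
        gcongr
        exact hEδ n
      · have hE0 : Filter.Tendsto E Filter.atTop (nhds 0) := by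
          rw [Metric.tendsto_atTop] at htend ⊢
          intro η hη
          obtain ⟨N, hN⟩ := htend (η / 2) (by linarith)
          refine ⟨N, fun n hn => ?_⟩
          have h1 : E n ≤ η / 2 := by
            refine ciSup_le fun k => ?_
            have := hN (n + k) (by omega)
            rw [Real.dist_eq, sub_zero, abs_abs] at this
            exact this.le
          rw [Real.dist_eq, sub_zero, abs_of_nonneg (hEnn n)]
          linarith
        have hE0' : Filter.Tendsto (fun n => E n / (lam - 1)) Filter.atTop (nhds 0) := by
          simpa using hE0.div_const (lam - 1)
        exact squeeze_zero (fun n => abs_nonneg _) hyb hE0'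
  · -- HShadowing
    intro ε hε
    obtain ⟨δ, hδpos, hδρ, hδε⟩ := hδ ε hε
    refine ⟨δ, hδpos, fun x m hx herr => ?_⟩
    obtain ⟨y, hym, hyb⟩ := lemB f Λ lam ρ hlam hρ cov m x (fun _ => δ)
      hx (fun i j _ => le_rfl) (fun _ => hδpos.le) hδρ (fun i hi => (herr i hi).le)
    have hy0 : |y - x 0| ≤ ρ := by
      have := hyb 0 (Nat.zero_le m)
      simp only [Function.iterate_zero, id_eq] at this
      refine this.trans ?_
      rw [div_le_iff₀ hl]; linarith
    exact ⟨y, hnb (x 0) (hx 0 (Nat.zero_le m)) y hy0,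
      fun i hi => lt_of_le_of_lt (hyb i hi.le) hδε, hym⟩
end

section
/- Let (X,d) be a compact metric space and let f : X → X be a homeomorphism. Then f has h-shadowing if and only if f has shadowing and f⁻¹ is equicontinuous. -/
open Metric Filter Topology Set

section Defs

variable {X : Type*} [MetricSpace X]

/-- all iterates of `g` are uniformly equicontinuous. -/
def EquicontinuousIter (g : X → X) : Prop :=
  ∀ ε > 0, ∃ δ > 0, ∀ x y : X, dist x y < δ → ∀ n : ℕ, dist (g^[n] x) (g^[n] y) < ε

end Defs

private lemma symm_iter_iter {X : Type*} [TopologicalSpace X] (f : X ≃ₜ X) (k : ℕ) (x : X) :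
    (⇑f.symm)^[k] ((⇑f)^[k] x) = x := by
  induction k with
  | zero => rfl
  | succ k ih =>
    rw [Function.iterate_succ_apply' (⇑f), Function.iterate_succ_apply (⇑f.symm),
      f.symm_apply_apply]
    exact ih

private lemma iter_symm_iter {X : Type*} [TopologicalSpace X] (f : X ≃ₜ X) (k : ℕ) (x : X) :
    (⇑f)^[k] ((⇑f.symm)^[k] x) = x := by
  have := symm_iter_iter f.symm k x
  simpa using this

theorem stmt17 {X : Type*} [MetricSpace X] [CompactSpace X] (f : X ≃ₜ X) :
    HShadowingOn (⇑f) Set.univ ↔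
      (ShadowingOn (⇑f) Set.univ ∧ EquicontinuousIter (⇑f.symm)) := by
  constructor
  · intro h
    constructor
    · -- shadowing
      intro ε hε
      obtain ⟨δ, hδ, hδ'⟩ := h (ε / 2) (by positivity)
      refine ⟨δ, hδ, fun x _ hpo => ?_⟩
      have key : ∀ m : ℕ, ∃ y : X, (∀ i < m, dist ((⇑f)^[i] y) (x i) < ε / 2) ∧
          (⇑f)^[m] y = x m := fun m =>
        hδ' x m (fun i _ => mem_univ _) (fun i _ => hpo i)
      choose y hy _ using key
      obtain ⟨z, -, φ, hφ, hz⟩ := isCompact_univ.tendsto_subseq (fun m => mem_univ (y m))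
      refine ⟨z, fun n => ?_⟩
      have hcont : Tendsto (fun k => dist ((⇑f)^[n] (y (φ k))) (x n)) atTop
          (𝓝 (dist ((⇑f)^[n] z) (x n))) :=
        (((f.continuous.iterate n).continuousAt.tendsto.comp hz).dist tendsto_const_nhds)
      have hle : dist ((⇑f)^[n] z) (x n) ≤ ε / 2 := by
        refine le_of_tendsto hcont ?_
        filter_upwards [hφ.tendsto_atTop.eventually_ge_atTop (n + 1)] with k hk
        exact (hy (φ k) n (Nat.lt_of_lt_of_le n.lt_succ_self hk)).le
      linarith
    · -- equicontinuity of the inverse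
      intro ε hε
      obtain ⟨δ, hδ, hδ'⟩ := h ε hε
      refine ⟨min δ ε, lt_min hδ hε, fun a b hab n => ?_⟩
      rcases Nat.eq_zero_or_pos n with rfl | hn
      · simpa using lt_of_lt_of_le hab (min_le_right _ _)
      · set x : ℕ → X := fun i => if i = n then b else (⇑f)^[i] ((⇑f.symm)^[n] a) with hxdef
        have hpo : ∀ i < n, dist (f (x i)) (x (i + 1)) < min δ ε := by
          intro i hi
          have hxi : x i = (⇑f)^[i] ((⇑f.symm)^[n] a) := by simp [hxdef, Nat.ne_of_lt hi]
          by_cases h1 : i + 1 = n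
          · have hfa : f (x i) = a := by
              rw [hxi, ← Function.iterate_succ_apply' (⇑f)]
              rw [show i.succ = n from h1]
              exact iter_symm_iter f n a
            have hxb : x (i + 1) = b := by simp [hxdef, h1]
            rw [hfa, hxb]; exact hab
          · have hx1 : x (i + 1) = (⇑f)^[i + 1] ((⇑f.symm)^[n] a) := by simp [hxdef, h1]
            rw [hxi, hx1, ← Function.iterate_succ_apply' (⇑f), dist_self]
            exact lt_min hδ hε
        obtain ⟨y, hsh, heq⟩ := hδ' x n (fun i _ => mem_univ _)
          (fun i hi => lt_of_lt_of_le (hpo i hi) (min_le_left _ _))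
        have hxn : x n = b := by simp [hxdef]
        have hyb : y = (⇑f.symm)^[n] b := by
          have h2 := congrArg ((⇑f.symm)^[n]) heq
          rwa [symm_iter_iter, hxn] at h2
        have h0 := hsh 0 hn
        have hx0 : x 0 = (⇑f.symm)^[n] a := by simp [hxdef, hn.ne]
        rw [Function.iterate_zero_apply, hx0, hyb] at h0
        rw [dist_comm]
        exact h0
  · rintro ⟨hs, he⟩
    intro ε hε
    obtain ⟨γ, hγ, hγ'⟩ := he (ε / 2) (by positivity)
    obtain ⟨δ, hδ, hδ'⟩ := hs (min γ (ε / 2)) (lt_min hγ (by positivity))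
    refine ⟨δ, hδ, fun x m _ hpo => ?_⟩
    set x' : ℕ → X := fun n => if n ≤ m then x n else (⇑f)^[n - m] (x m) with hx'
    have hx'eq : ∀ i ≤ m, x' i = x i := fun i hi => by simp [hx', hi]
    have hpo' : IsPseudoOrbit (⇑f) δ x' := by
      intro n
      by_cases hn : n + 1 ≤ m
      · rw [hx'eq n (Nat.le_of_succ_le hn), hx'eq (n + 1) hn]
        exact hpo n hn
      · have hnm : m ≤ n := Nat.lt_succ_iff.mp (Nat.lt_of_not_le hn)
        have hxn : x' n = (⇑f)^[n - m] (x m) := by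
          by_cases h : n ≤ m
          · have : n = m := le_antisymm h hnm
            subst this; simp [hx']
          · simp [hx', h]
        have hxn1 : x' (n + 1) = (⇑f)^[n + 1 - m] (x m) := by
          simp [hx', hn]
        rw [hxn, hxn1, ← Function.iterate_succ_apply' (⇑f), Nat.succ_sub hnm, dist_self]
        exact hδ
    obtain ⟨y, hy⟩ := hδ' x' (fun n => mem_univ _) hpo'
    set z := (⇑f.symm)^[m] (x m) with hzdef
    have hzm : (⇑f)^[m] z = x m := iter_symm_iter f m (x m)
    have hkey : dist ((⇑f)^[m] y) (x m) < γ := by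
      have := hy m
      rw [hx'eq m le_rfl] at this
      exact lt_of_lt_of_le this (min_le_left _ _)
    refine ⟨z, fun i hi => ?_, hzm⟩
    have hk := hγ' _ _ hkey (m - i)
    have hiy : (⇑f.symm)^[m - i] ((⇑f)^[m] y) = (⇑f)^[i] y := by
      rw [show (⇑f)^[m] y = (⇑f)^[m - i] ((⇑f)^[i] y) from by
        rw [← Function.iterate_add_apply, Nat.sub_add_cancel hi.le], symm_iter_iter]
    have hiz : (⇑f)^[i] z = (⇑f.symm)^[m - i] (x m) := by
      rw [hzdef, show (⇑f.symm)^[m] (x m) = (⇑f.symm)^[i] ((⇑f.symm)^[m - i] (x m)) from by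
        rw [← Function.iterate_add_apply, Nat.add_sub_cancel' hi.le], iter_symm_iter]
    rw [hiy, ← hiz] at hk
    have h2 := hy i
    rw [hx'eq i hi.le] at h2
    calc dist ((⇑f)^[i] z) (x i) ≤ dist ((⇑f)^[i] z) ((⇑f)^[i] y) + dist ((⇑f)^[i] y) (x i) :=
          dist_triangle _ _ _
      _ < ε / 2 + min γ (ε / 2) := add_lt_add (dist_comm ((⇑f)^[i] y) ((⇑f)^[i] z) ▸ hk) h2
      _ ≤ ε / 2 + ε / 2 := by gcongr; exact min_le_right _ _
      _ = ε := by ring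
end

section
/- Let (X,d) be a compact metric space and let f : X → X be a homeomorphism. Then f has shadowing and f⁻¹ is equicontinuous if and only if f is equicontinuous and X is totally disconnected. -/
open Metric Filter Topology Set

section AuxA


variable {X : Type*} [MetricSpace X]

lemma my_iter_apply_symm_iter (f : X ≃ₜ X) (n : ℕ) (x : X) :
    (⇑f)^[n] ((⇑f.symm)^[n] x) = x := by
  induction n with
  | zero => simp
  | succ k ih =>
    rw [Function.iterate_succ_apply' (⇑f.symm) k x, Function.iterate_succ_apply (⇑f)]
    rw [f.apply_symm_apply]
    exact ih

lemma my_apply_symm_iter_succ (f : X ≃ₜ X) (k : ℕ) (x : X) :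
    f ((⇑f.symm)^[k+1] x) = (⇑f.symm)^[k] x := by
  rw [Function.iterate_succ_apply' (⇑f.symm) k x, f.apply_symm_apply]

/-- near returns for equicontinuous homeos of compact spaces -/
lemma my_near_return [CompactSpace X] (f : X ≃ₜ X) (hf : EquicontinuousIter (⇑f))
    {τ : ℝ} (hτ : 0 < τ) (N : ℕ) :
    ∃ m, N ≤ m ∧ ∀ z : X, dist ((⇑f)^[m] z) z < τ := by
  obtain ⟨δ, hδ, hδ'⟩ := hf (τ/4) (by linarith)
  obtain ⟨F, hFfin, hFcov⟩ := (Metric.totallyBounded_iff.1 (isCompact_univ (X := X)).totallyBounded) δ hδ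
  obtain ⟨G, hGfin, hGcov⟩ := (Metric.totallyBounded_iff.1 (isCompact_univ (X := X)).totallyBounded) (τ/8) (by linarith)
  have hsel : ∀ (n : ℕ) (p : F), ∃ g : G, dist ((⇑f)^[n] (p : X)) (g : X) < τ/8 := by
    intro n p
    have : ((⇑f)^[n] (p : X)) ∈ ⋃ y ∈ G, ball y (τ/8) := hGcov (mem_univ _)
    obtain ⟨g, hg, hmem⟩ := mem_iUnion₂.1 this
    exact ⟨⟨g, hg⟩, mem_ball.1 hmem⟩
  choose T hT using hsel
  have : Finite ↥F := hFfin.to_subtype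
  have : Finite ↥G := hGfin.to_subtype
  obtain ⟨t0, ht0⟩ := Finite.exists_infinite_fiber T
  have ht0' : (T ⁻¹' {t0} : Set ℕ).Infinite := Set.infinite_coe_iff.1 ht0
  obtain ⟨n1, hn1, _⟩ := ht0'.exists_gt 0
  obtain ⟨n2, hn2, hlt⟩ := ht0'.exists_gt (n1 + N)
  have hTeq : T n1 = T n2 := by
    have e1 : T n1 = t0 := hn1
    have e2 : T n2 = t0 := hn2
    rw [e1, e2]
  have key : ∀ x : X, dist ((⇑f)^[n1] x) ((⇑f)^[n2] x) < τ := by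
    intro x
    have : x ∈ ⋃ y ∈ F, ball y δ := hFcov (mem_univ x)
    obtain ⟨p, hp, hmem⟩ := mem_iUnion₂.1 this
    have hxp : dist x p < δ := mem_ball.1 hmem
    have h1 : dist ((⇑f)^[n1] x) ((⇑f)^[n1] p) < τ/4 := hδ' x p hxp n1
    have h2 : dist ((⇑f)^[n2] x) ((⇑f)^[n2] p) < τ/4 := hδ' x p hxp n2
    have h3 : dist ((⇑f)^[n1] p) ((T n1 ⟨p, hp⟩ : X)) < τ/8 := hT n1 ⟨p, hp⟩
    have h4 : dist ((⇑f)^[n2] p) ((T n2 ⟨p, hp⟩ : X)) < τ/8 := hT n2 ⟨p, hp⟩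
    rw [hTeq] at h3
    have t1 := dist_triangle4 ((⇑f)^[n1] x) ((⇑f)^[n1] p) ((⇑f)^[n2] p) ((⇑f)^[n2] x)
    have t2 := dist_triangle ((⇑f)^[n1] p) ((T n2 ⟨p, hp⟩ : X)) ((⇑f)^[n2] p)
    have c1 := dist_comm ((T n2 ⟨p, hp⟩ : X)) ((⇑f)^[n2] p)
    have c2 := dist_comm ((⇑f)^[n2] p) ((⇑f)^[n2] x)
    linarith
  refine ⟨n2 - n1, by omega, fun z => ?_⟩
  have hz : (⇑f)^[n1] ((⇑f.symm)^[n1] z) = z := my_iter_apply_symm_iter f n1 z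
  have hz2 : (⇑f)^[n2] ((⇑f.symm)^[n1] z) = (⇑f)^[n2 - n1] z := by
    have hadd : n2 - n1 + n1 = n2 := by omega
    conv_lhs => rw [← hadd]
    rw [Function.iterate_add_apply, hz]
  have := key ((⇑f.symm)^[n1] z)
  rw [hz, hz2, dist_comm] at this
  exact this

/-- equicontinuity of forward iterates implies equicontinuity of backward iterates -/
lemma my_equicont_symm [CompactSpace X] (f : X ≃ₜ X) (hf : EquicontinuousIter (⇑f)) :
    EquicontinuousIter (⇑f.symm) := by
  intro ε hε
  obtain ⟨δ, hδ, h⟩ := hf (ε/3) (by linarith)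
  refine ⟨δ, hδ, fun x y hxy n => ?_⟩
  obtain ⟨m, hmn, hm⟩ := my_near_return f hf (show (0:ℝ) < ε/3 by linarith) n
  have e1 : (⇑f)^[m] ((⇑f.symm)^[n] x) = (⇑f)^[m-n] x := by
    have hn : m - n + n = m := Nat.sub_add_cancel hmn
    conv_lhs => rw [← hn]
    rw [Function.iterate_add_apply, my_iter_apply_symm_iter]
  have e2 : (⇑f)^[m] ((⇑f.symm)^[n] y) = (⇑f)^[m-n] y := by
    have hn : m - n + n = m := Nat.sub_add_cancel hmn
    conv_lhs => rw [← hn]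
    rw [Function.iterate_add_apply, my_iter_apply_symm_iter]
  have h1 : dist ((⇑f)^[m] ((⇑f.symm)^[n] x)) ((⇑f.symm)^[n] x) < ε/3 := hm _
  have h2 : dist ((⇑f)^[m] ((⇑f.symm)^[n] y)) ((⇑f.symm)^[n] y) < ε/3 := hm _
  have h3 : dist ((⇑f)^[m-n] x) ((⇑f)^[m-n] y) < ε/3 := h x y hxy (m-n)
  rw [e1] at h1; rw [e2] at h2
  calc dist ((⇑f.symm)^[n] x) ((⇑f.symm)^[n] y)
      ≤ dist ((⇑f.symm)^[n] x) ((⇑f)^[m-n] x) + dist ((⇑f)^[m-n] x) ((⇑f)^[m-n] y)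
        + dist ((⇑f)^[m-n] y) ((⇑f.symm)^[n] y) := dist_triangle4 _ _ _ _
    _ < ε := by
        have c1 := dist_comm ((⇑f.symm)^[n] x) ((⇑f)^[m-n] x)
        have c2 := dist_comm ((⇑f)^[m-n] y) ((⇑f.symm)^[n] y)
        linarith

end AuxA

section AuxB

variable {X : Type*} [MetricSpace X]

lemma my_exists_chain {t : Set X} (ht : IsPreconnected t) {a b : X} (ha : a ∈ t) (hb : b ∈ t)
    {η : ℝ} (hη : 0 < η) :
    ∃ (m : ℕ) (c : ℕ → X), c 0 = a ∧ c m = b ∧ ∀ i < m, dist (c i) (c (i + 1)) < η := by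
  classical
  set P : X → Prop := fun y => ∃ (m : ℕ) (c : ℕ → X), c 0 = a ∧ c m = y ∧
    ∀ i < m, dist (c i) (c (i + 1)) < η with hP
  have hext : ∀ y y', P y → dist y y' < η → P y' := by
    rintro y y' ⟨m, c, hc0, hcm, hstep⟩ hd
    refine ⟨m + 1, fun i => if i ≤ m then c i else y', by simp [hc0], by simp, ?_⟩
    intro i hi
    rcases lt_or_eq_of_le (Nat.lt_succ_iff.1 hi) with hlt | heq
    · have h1 : i ≤ m := hlt.le
      have h2 : i + 1 ≤ m := hlt
      simp only [h1, h2, if_pos]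
      exact hstep i hlt
    · subst heq
      have h1 : i ≤ i := le_refl i
      have h2 : ¬ (i + 1 ≤ i) := by omega
      simp only [h1, if_pos, h2, if_neg, hcm]
      exact hd
  have hPa : P a := ⟨0, fun _ => a, rfl, rfl, by omega⟩
  have hopen : IsOpen {y | P y} := by
    rw [Metric.isOpen_iff]
    intro y hy
    exact ⟨η, hη, fun y' hy' => hext y y' hy (mem_ball'.1 hy')⟩
  have hopen' : IsOpen {y | ¬ P y} := by
    rw [Metric.isOpen_iff]
    intro y hy
    refine ⟨η, hη, fun y' hy' => ?_⟩
    intro hPy'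
    exact hy (hext y' y hPy' (mem_ball.1 hy'))
  by_contra hnb
  have hcover : t ⊆ {y | P y} ∪ {y | ¬ P y} := fun z _ => by
    by_cases h : P z
    · exact Or.inl h
    · exact Or.inr h
  have h1 : (t ∩ {y | P y}).Nonempty := ⟨a, ha, hPa⟩
  have h2 : (t ∩ {y | ¬ P y}).Nonempty := ⟨b, hb, fun hPb => hnb hPb⟩
  obtain ⟨z, _, hz1, hz2⟩ := ht _ _ hopen hopen' hcover h1 h2
  exact hz2 hz1

lemma my_clopen_partition [CompactSpace X] [TotallyDisconnectedSpace X] {r : ℝ} (hr : 0 < r) :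
    ∃ (k : ℕ) (U : Fin k → Set X), (∀ i, IsOpen (U i)) ∧ (∀ x : X, ∃ i, x ∈ U i) ∧
      (∀ i j (x : X), x ∈ U i → x ∈ U j → i = j) ∧
      (∀ i, ∀ x ∈ U i, ∀ y ∈ U i, dist x y < r) := by
  classical
  have hV : ∀ x : X, ∃ V : Set X, IsClopen V ∧ x ∈ V ∧ V ⊆ ball x (r/2) :=
    fun x => compact_exists_isClopen_in_isOpen isOpen_ball (mem_ball_self (by linarith))
  choose V hVclopen hVmem hVsub using hV
  obtain ⟨s, hs⟩ := isCompact_univ.elim_finite_subcover V (fun x => (hVclopen x).2)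
    (fun x _ => mem_iUnion.2 ⟨x, hVmem x⟩)
  set k := s.card with hk
  set e : Fin k → X := fun i => (s.equivFin.symm i : X) with he
  set W : Fin k → Set X := fun i => V (e i) \ ⋃ (j : Fin k) (_ : j < i), V (e j) with hW
  have hWsub : ∀ i, W i ⊆ V (e i) := fun i => diff_subset
  refine ⟨k, W, ?_, ?_, ?_, ?_⟩
  · intro i
    refine (hVclopen (e i)).2.sdiff ?_
    exact isClosed_iUnion_of_finite fun j => isClosed_iUnion_of_finite fun _ => (hVclopen (e j)).1
  · intro x
    have hx : x ∈ ⋃ y ∈ s, V y := hs (mem_univ x)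
    have hx2 : ∃ i : Fin k, x ∈ V (e i) := by
      obtain ⟨y, hy, hxy⟩ := mem_iUnion₂.1 hx
      exact ⟨s.equivFin ⟨y, hy⟩, by simpa [he] using hxy⟩
    have hex : ∃ n : ℕ, ∃ h : n < k, x ∈ V (e ⟨n, h⟩) := by
      obtain ⟨i, hi⟩ := hx2
      exact ⟨i.1, i.2, by simpa using hi⟩
    let n := Nat.find hex
    obtain ⟨hn, hxn⟩ := Nat.find_spec hex
    refine ⟨⟨n, hn⟩, hxn, ?_⟩
    intro hmem
    obtain ⟨j, hj⟩ := mem_iUnion.1 hmem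
    obtain ⟨hjlt, hxj⟩ := mem_iUnion.1 hj
    exact Nat.find_min hex (show (j : ℕ) < n from hjlt) ⟨j.2, by simpa using hxj⟩
  · intro i j x hxi hxj
    by_contra hij
    rcases lt_or_gt_of_ne hij with h | h
    · exact hxj.2 (mem_iUnion.2 ⟨i, mem_iUnion.2 ⟨h, hxi.1⟩⟩)
    · exact hxi.2 (mem_iUnion.2 ⟨j, mem_iUnion.2 ⟨h, hxj.1⟩⟩)
  · intro i x hx y hy
    have h1 := hVsub (e i) (hWsub i hx)
    have h2 := hVsub (e i) (hWsub i hy)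
    have := dist_triangle x (e i) y
    rw [mem_ball] at h1 h2
    rw [dist_comm] at h2
    calc dist x y ≤ dist x (e i) + dist (e i) y := dist_triangle x (e i) y
      _ < r/2 + r/2 := by rw [dist_comm (e i) y] at h2 ⊢; exact add_lt_add h1 h2
      _ = r := by ring

end AuxB

section AuxC

variable {X : Type*} [MetricSpace X] [CompactSpace X]

lemma my_shadowing [TotallyDisconnectedSpace X] (f : X ≃ₜ X) (hEp : EquicontinuousIter (⇑f)) :
    ShadowingOn (⇑f) Set.univ := by
  intro ε hε
  have hEm := my_equicont_symm f hEp
  obtain ⟨k, U, hUopen, hUcov, hUdisj, hUmesh⟩ := my_clopen_partition (X := X) hε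
  obtain ⟨γ, hγ, hleb⟩ := lebesgue_number_lemma_of_metric isCompact_univ hUopen
    (fun x _ => mem_iUnion.2 (hUcov x))
  obtain ⟨δ1, hδ1, h1⟩ := hEp (γ/2) (by linarith)
  obtain ⟨δ2, hδ2, h2⟩ := hEm (γ/2) (by linarith)
  set Rel : X → X → Prop := fun u v => ∀ n : ℕ,
    (∃ i, (⇑f)^[n] u ∈ U i ∧ (⇑f)^[n] v ∈ U i) ∧
    (∃ i, (⇑f.symm)^[n] u ∈ U i ∧ (⇑f.symm)^[n] v ∈ U i) with hRel
  have hsame : ∀ u v : X, dist u v < γ → ∃ i, u ∈ U i ∧ v ∈ U i := by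
    intro u v hd
    obtain ⟨i, hi⟩ := hleb u (mem_univ u)
    exact ⟨i, hi (mem_ball_self hγ), hi (by rw [mem_ball, dist_comm]; exact hd)⟩
  have hclose : ∀ u v, dist u v < min δ1 δ2 → Rel u v := by
    intro u v hd n
    constructor
    · exact hsame _ _ (by have := h1 u v (lt_of_lt_of_le hd (min_le_left _ _)) n; linarith)
    · exact hsame _ _ (by have := h2 u v (lt_of_lt_of_le hd (min_le_right _ _)) n; linarith)
  have hrefl : ∀ u, Rel u u := by
    intro u n
    constructor
    · obtain ⟨i, hi⟩ := hUcov ((⇑f)^[n] u); exact ⟨i, hi, hi⟩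
    · obtain ⟨i, hi⟩ := hUcov ((⇑f.symm)^[n] u); exact ⟨i, hi, hi⟩
  have htrans : ∀ u v w, Rel u v → Rel v w → Rel u w := by
    intro u v w huv hvw n
    obtain ⟨⟨i, hi1, hi2⟩, ⟨i', hi1', hi2'⟩⟩ := huv n
    obtain ⟨⟨j, hj1, hj2⟩, ⟨j', hj1', hj2'⟩⟩ := hvw n
    have : i = j := hUdisj i j _ hi2 hj1
    have h' : i' = j' := hUdisj i' j' _ hi2' hj1'
    subst this; subst h'
    exact ⟨⟨i, hi1, hj2⟩, ⟨i', hi1', hj2'⟩⟩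
  have hstep : ∀ u v, Rel u v → Rel (f u) (f v) := by
    intro u v huv n
    constructor
    · have := (huv (n + 1)).1
      rwa [Function.iterate_succ_apply, Function.iterate_succ_apply] at this
    · cases n with
      | zero =>
        have := (huv 1).1
        simpa using this
      | succ m =>
        have := (huv m).2
        refine Exists.imp (fun i hi => ?_) this
        rw [Function.iterate_succ_apply (⇑f.symm) m (f u),
          Function.iterate_succ_apply (⇑f.symm) m (f v), f.symm_apply_apply, f.symm_apply_apply]
        exact hi
  have hout : ∀ u v, Rel u v → dist u v < ε := by
    intro u v huv
    obtain ⟨⟨i, hi1, hi2⟩, -⟩ := huv 0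
    simp only [Function.iterate_zero_apply] at hi1 hi2
    exact hUmesh i u hi1 v hi2
  refine ⟨min δ1 δ2, lt_min hδ1 hδ2, fun x _ hpo => ⟨x 0, fun n => ?_⟩⟩
  have key : ∀ n, Rel ((⇑f)^[n] (x 0)) (x n) := by
    intro n
    induction n with
    | zero => exact hrefl (x 0)
    | succ m ih =>
      have hA : Rel ((⇑f)^[m+1] (x 0)) (f (x m)) := by
        have := hstep _ _ ih
        rwa [← Function.iterate_succ_apply' (⇑f) m (x 0)] at this
      exact htrans _ _ _ hA (hclose _ _ (hpo m))
  exact hout _ _ (key n)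

end AuxC

theorem stmt18 {X : Type*} [MetricSpace X] [CompactSpace X] (f : X ≃ₜ X) :
    (ShadowingOn (⇑f) Set.univ ∧ EquicontinuousIter (⇑f.symm)) ↔
      (EquicontinuousIter (⇑f) ∧ TotallyDisconnectedSpace X) := by
  constructor
  · rintro ⟨hsh, hEm⟩
    have hEp : EquicontinuousIter (⇑f) := by
      have := my_equicont_symm f.symm hEm
      rwa [Homeomorph.symm_symm] at this
    refine ⟨hEp, ?_⟩
    refine ⟨fun t _ hconn a ha b hb => ?_⟩
    by_contra hab
    have hd : 0 < dist a b := dist_pos.2 hab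
    set ε : ℝ := dist a b / 2 with hε
    have hεpos : 0 < ε := by rw [hε]; linarith
    obtain ⟨δp, hδp, hp⟩ := hEp ε hεpos
    set ε2 : ℝ := min δp (ε/4) with hε2d
    have hε2 : 0 < ε2 := lt_min hδp (by linarith)
    obtain ⟨δ2, hδ2, hsh2⟩ := hsh ε2 hε2
    obtain ⟨η, hη, hback⟩ := hEm δ2 hδ2
    obtain ⟨m, c, hc0, hcm, hcs⟩ := my_exists_chain hconn ha hb hη
    set x : ℕ → X := fun n => if n < m then (⇑f.symm)^[m - n] (c n) else (⇑f)^[n - m] b with hx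
    have hxm : ∀ n, m ≤ n → x n = (⇑f)^[n - m] b := by
      intro n h; simp only [hx]; rw [if_neg (Nat.not_lt.2 h)]
    have hxlt : ∀ n, n ≤ m → x n = (⇑f.symm)^[m - n] (c n) := by
      intro n hn
      rcases lt_or_eq_of_le hn with h | h
      · simp only [hx]; rw [if_pos h]
      · subst h
        simp only [hx]
        rw [if_neg (lt_irrefl n)]
        simp [hcm]
    have hpo : IsPseudoOrbit (⇑f) δ2 x := by
      intro n
      rcases lt_or_ge n m with h | h
      · have h1 : x n = (⇑f.symm)^[m - n] (c n) := hxlt n h.le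
        have h2 : x (n+1) = (⇑f.symm)^[m - (n+1)] (c (n+1)) := hxlt (n+1) h
        have hk : m - n = (m - (n+1)) + 1 := by omega
        rw [h1, h2, hk, my_apply_symm_iter_succ]
        exact hback (c n) (c (n+1)) (hcs n h) (m - (n+1))
      · rw [hxm n h, hxm (n+1) (by omega)]
        have hk : n + 1 - m = (n - m) + 1 := by omega
        rw [hk, Function.iterate_succ_apply' (⇑f) (n - m) b]
        simpa using hδ2
    obtain ⟨y, hy⟩ := hsh2 x (fun n => mem_univ _) hpo
    have h0 := hy 0
    rw [hxlt 0 (Nat.zero_le m)] at h0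
    simp only [Function.iterate_zero_apply, Nat.sub_zero, hc0] at h0
    have hchain0 : dist ((⇑f)^[m] y) a < ε := by
      have := hp y ((⇑f.symm)^[m] a) (lt_of_lt_of_le h0 (min_le_left _ _)) m
      rwa [my_iter_apply_symm_iter] at this
    have hmth := hy m
    rw [hxm m le_rfl] at hmth
    simp only [Nat.sub_self, Function.iterate_zero_apply] at hmth
    have htri : dist a b ≤ dist a ((⇑f)^[m] y) + dist ((⇑f)^[m] y) b := dist_triangle _ _ _
    have hq : ε2 ≤ ε/4 := min_le_right _ _
    rw [dist_comm] at hchain0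
    linarith
  · rintro ⟨hEp, hTD⟩
    exact ⟨my_shadowing f hEp, my_equicont_symm f hEp⟩
end

section
/- Let (X,d) be a compact metric space and let f : X → X be a homeomorphism. If f⁻¹ is equicontinuous, then every point of X is recurrent under f, i.e. for every x ∈ X and every ε > 0 there exist arbitrarily large n ∈ ℕ with d(f^n(x), x) < ε. -/
open Metric Filter Topology Set

theorem stmt19 {X : Type*} [MetricSpace X] [CompactSpace X] (f : X ≃ₜ X)
    (heq : EquicontinuousIter (⇑f.symm)) :
    ∀ x : X, ∀ ε > 0, ∀ N : ℕ, ∃ n : ℕ, N ≤ n ∧ dist ((⇑f)^[n] x) x < ε := by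
  intro x ε hε N
  obtain ⟨δ, hδ, hδ'⟩ := heq ε hε
  set M := N + 1 with hM
  set y : ℕ → X := fun k => (⇑f)^[k * M] x with hy
  obtain ⟨z, -, φ, hφ, hlim⟩ :=
    IsCompact.tendsto_subseq (isCompact_univ (X := X)) (fun k => mem_univ (y k))
  rw [Metric.tendsto_atTop] at hlim
  obtain ⟨K, hK⟩ := hlim (δ / 2) (by linarith)
  set i := φ K with hi
  set j := φ (K + 1) with hj
  have hij : i < j := hφ (Nat.lt_succ_self K)
  have hd : dist (y i) (y j) < δ := by
    have h1 := hK K le_rfl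
    have h2 := hK (K + 1) (Nat.le_succ K)
    calc dist (y i) (y j) ≤ dist (y i) z + dist (y j) z := dist_triangle_right _ _ _
      _ < δ / 2 + δ / 2 := add_lt_add h1 h2
      _ = δ := by ring
  have key := hδ' (y i) (y j) hd (i * M)
  have hli : Function.LeftInverse (⇑f.symm) (⇑f) := f.symm_apply_apply
  have e1 : (⇑f.symm)^[i * M] (y i) = x := (hli.iterate (i * M)) x
  have e2 : (⇑f.symm)^[i * M] (y j) = (⇑f)^[(j - i) * M] x := by
    have : j * M = i * M + (j - i) * M := by
      rw [← Nat.add_mul, Nat.add_sub_cancel' hij.le]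
    simp only [hy, this, Function.iterate_add_apply]
    exact (hli.iterate (i * M)) _
  refine ⟨(j - i) * M, ?_, ?_⟩
  · have h1 : 1 ≤ j - i := Nat.one_le_iff_ne_zero.mpr (Nat.sub_ne_zero_of_lt hij)
    calc N ≤ M := Nat.le_succ N
      _ = 1 * M := (one_mul M).symm
      _ ≤ (j - i) * M := Nat.mul_le_mul_right M h1
  · rw [e1, e2] at key
    rw [dist_comm]
    exact key
end
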